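/- arXiv:2603.09019 — 8 statements merged into one kernel-verified Lean document; each statement's English description precedes it below -/
import Mathlib

section
/- b = ∑_{i=1}^n (W_i − T_i/2) · ∏_{j≠i} (1 − 2T_j), i.e., E[X·(−1)^S] equals this explicit sum. -/
open MeasureTheory ProbabilityTheory Finset
open scoped Classical

noncomputable def gfun : ℝ → ℝ := fun x => if x = 1/2 then -1 else 1

lemma gfun_meas : Measurable gfun :=
  Measurable.ite (measurableSet_eq) measurable_const measurable_const

lemma gfun_abs (x : ℝ) : |gfun x| ≤ 1 := by
  unfold gfun; split <;> norm_num

noncomputable def hfun : ℝ → ℝ := fun x => x * gfun x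

lemma hfun_meas : Measurable hfun := measurable_id.mul gfun_meas

lemma integral_prod_of_indep {Ω} [MeasureSpace Ω] [IsProbabilityMeasure (ℙ : Measure Ω)]
    {ι : Type*} (f : ι → Ω → ℝ) (hmeas : ∀ i, Measurable (f i))
    (hind : iIndepFun f ℙ)
    (hbd : ∀ i, ∀ᵐ ω ∂ℙ, |f i ω| ≤ 1) (s : Finset ι) :
    (∀ᵐ ω ∂ℙ, |∏ j ∈ s, f j ω| ≤ 1) ∧
    Integrable (fun ω => ∏ j ∈ s, f j ω) ℙ ∧
      ∫ ω, ∏ j ∈ s, f j ω ∂ℙ = ∏ j ∈ s, ∫ ω, f j ω ∂ℙ := by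
  classical
  induction s using Finset.cons_induction with
  | empty => simp
  | cons i s hi ih =>
    have hint_i : Integrable (f i) ℙ := by
      refine (integrable_const (1:ℝ)).mono' (hmeas i).aestronglyMeasurable ?_
      filter_upwards [hbd i] with ω h using by simpa only [Real.norm_eq_abs] using h
    have hb : ∀ᵐ ω ∂ℙ, |∏ j ∈ Finset.cons i s hi, f j ω| ≤ 1 := by
      filter_upwards [hbd i, ih.1] with ω h1 h2
      rw [Finset.prod_cons, abs_mul]
      calc |f i ω| * |∏ j ∈ s, f j ω| ≤ 1 * 1 := by
            exact mul_le_mul h1 h2 (abs_nonneg _) zero_le_one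
        _ = 1 := one_mul 1
    have hindep2 : IndepFun (f i) (fun ω => ∏ j ∈ s, f j ω) ℙ := by
      have h := (hind.indepFun_finsetProd_of_notMem hmeas hi).symm
      convert h using 1
      ext ω; simp
    have hint : Integrable (fun ω => ∏ j ∈ Finset.cons i s hi, f j ω) ℙ := by
      refine (integrable_const (1:ℝ)).mono' ?_ ?_
      · exact (Finset.measurable_prod _ fun j _ => hmeas j).aestronglyMeasurable
      · filter_upwards [hb] with ω h using by simpa only [Real.norm_eq_abs] using h
    refine ⟨hb, hint, ?_⟩
    have := hindep2.integral_mul_eq_mul_integral hint_i.aestronglyMeasurable ih.2.1.aestronglyMeasurable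
    simp only [Finset.prod_cons]
    calc ∫ ω, f i ω * ∏ j ∈ s, f j ω ∂ℙ
        = ∫ ω, (f i * fun ω => ∏ j ∈ s, f j ω) ω ∂ℙ := by rfl
      _ = (∫ ω, f i ω ∂ℙ) * ∫ ω, ∏ j ∈ s, f j ω ∂ℙ := this
      _ = (∫ ω, f i ω ∂ℙ) * ∏ j ∈ s, ∫ ω, f j ω ∂ℙ := by rw [ih.2.2]

lemma integral_gfun {Ω} [MeasureSpace Ω] [IsProbabilityMeasure (ℙ : Measure Ω)]
    (Y : Ω → ℝ) (hY : Measurable Y) :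
    ∫ ω, gfun (Y ω) ∂ℙ = 1 - 2 * (ℙ {ω | Y ω = 1/2}).toReal := by
  have hAm : MeasurableSet {ω | Y ω = 1/2} := hY (measurableSet_singleton _)
  have heq : ∀ ω, gfun (Y ω) =
      1 - 2 * Set.indicator {ω | Y ω = 1/2} (fun _ => (1:ℝ)) ω := by
    intro ω
    by_cases h : Y ω = 1/2
    · simp [gfun, h, Set.indicator_apply]; norm_num
    · simp only [gfun, Set.indicator_apply, Set.mem_setOf_eq, if_neg h]; norm_num
  simp only [heq]
  rw [integral_sub (integrable_const _)
    (((integrable_const (1:ℝ)).indicator hAm).const_mul 2)]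
  rw [MeasureTheory.integral_const_mul, integral_indicator_const _ hAm]
  simp [measureReal_def]

lemma ae_tri {Ω} [MeasureSpace Ω] [IsProbabilityMeasure (ℙ : Measure Ω)]
    (Y : Ω → ℝ) (hY : Measurable Y) {t w : ℝ}
    (h1 : (ℙ {ω | Y ω = 1/2}).toReal = t)
    (h2 : (ℙ {ω | Y ω = 1}).toReal = w)
    (h3 : (ℙ {ω | Y ω = 0}).toReal = 1 - t - w) :
    ∀ᵐ ω ∂ℙ, Y ω = 1/2 ∨ Y ω = 1 ∨ Y ω = 0 := by
  set A := {ω | Y ω = 1/2} with hA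
  set B := {ω | Y ω = 1} with hB
  set C := {ω | Y ω = 0} with hC
  have hAm : MeasurableSet A := hY (measurableSet_singleton _)
  have hBm : MeasurableSet B := hY (measurableSet_singleton _)
  have hCm : MeasurableSet C := hY (measurableSet_singleton _)
  have hd1 : Disjoint B C := by
    rw [Set.disjoint_left]; intro ω hb hc
    simp only [hB, hC, Set.mem_setOf_eq] at hb hc
    rw [hb] at hc; norm_num at hc
  have hd2 : Disjoint A (B ∪ C) := by
    rw [Set.disjoint_left]; intro ω ha hbc
    simp only [hA, hB, hC, Set.mem_setOf_eq, Set.mem_union] at ha hbc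
    rcases hbc with h | h <;> (rw [ha] at h; norm_num at h)
  have hu : ℙ (A ∪ (B ∪ C)) = ℙ A + ℙ B + ℙ C := by
    rw [measure_union hd2 (hBm.union hCm), measure_union hd1 hCm, add_assoc]
  have hsum : ℙ A + ℙ B + ℙ C = 1 := by
    rw [← ENNReal.toReal_eq_one_iff,
      ENNReal.toReal_add (by finiteness) (by finiteness),
      ENNReal.toReal_add (by finiteness) (by finiteness), h1, h2, h3]
    ring
  have hc0 : ℙ ((A ∪ (B ∪ C))ᶜ) = 0 := by
    rw [measure_compl (hAm.union (hBm.union hCm)) (measure_ne_top _ _), hu, hsum,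
      measure_univ, tsub_self]
  rw [ae_iff]
  have hset : {ω | ¬(Y ω = 1/2 ∨ Y ω = 1 ∨ Y ω = 0)} = (A ∪ (B ∪ C))ᶜ := by
    ext ω
    simp only [hA, hB, hC, Set.mem_setOf_eq, Set.mem_compl_iff, Set.mem_union]
  rw [hset]
  exact hc0

lemma integral_hfun {Ω} [MeasureSpace Ω] [IsProbabilityMeasure (ℙ : Measure Ω)]
    (Y : Ω → ℝ) (hY : Measurable Y) {t w : ℝ}
    (h1 : (ℙ {ω | Y ω = 1/2}).toReal = t)
    (h2 : (ℙ {ω | Y ω = 1}).toReal = w)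
    (h3 : (ℙ {ω | Y ω = 0}).toReal = 1 - t - w) :
    ∫ ω, hfun (Y ω) ∂ℙ = w - t / 2 := by
  have hAm : MeasurableSet {ω | Y ω = 1/2} := hY (measurableSet_singleton _)
  have hBm : MeasurableSet {ω | Y ω = 1} := hY (measurableSet_singleton _)
  have hae := ae_tri Y hY h1 h2 h3
  have heq : (fun ω => hfun (Y ω)) =ᵐ[ℙ] fun ω =>
      Set.indicator {ω | Y ω = 1} (fun _ => (1:ℝ)) ω +
      Set.indicator {ω | Y ω = 1/2} (fun _ => (-(1/2) : ℝ)) ω := by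
    filter_upwards [hae] with ω h
    rcases h with h | h | h <;>
      · simp only [hfun, gfun, Set.indicator_apply, Set.mem_setOf_eq, h]
        norm_num
  rw [integral_congr_ae heq,
    integral_add ((integrable_const _).indicator hBm) ((integrable_const _).indicator hAm),
    integral_indicator_const _ hBm, integral_indicator_const _ hAm, measureReal_def, measureReal_def, h1, h2]
  simp
  ring


/-- `b = E[X·(-1)^S] = ∑_i (W_i - T_i/2) ∏_{j ≠ i} (1 - 2 T_j)`. -/
theorem poisson_trinomial_b_eq_sum
    {Ω : Type*} [MeasureSpace Ω] [IsProbabilityMeasure (ℙ : Measure Ω)]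
    {n : ℕ} (X : Fin n → Ω → ℝ) (T W : Fin n → ℝ)
    (hmeas : ∀ i, Measurable (X i))
    (hindep : iIndepFun X ℙ)
    (hT0 : ∀ i, 0 ≤ T i) (hW0 : ∀ i, 0 ≤ W i) (hTW1 : ∀ i, T i + W i ≤ 1)
    (hT : ∀ i, (ℙ {ω | X i ω = 1/2}).toReal = T i)
    (hW : ∀ i, (ℙ {ω | X i ω = 1}).toReal = W i)
    (hL : ∀ i, (ℙ {ω | X i ω = 0}).toReal = 1 - T i - W i)
    (b : ℝ)
    (hb : b = ∫ ω, (∑ i, X i ω) *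
        (-1 : ℝ) ^ (univ.filter (fun i => X i ω = 1/2)).card ∂ℙ) :
    b = ∑ i, (W i - T i / 2) * ∏ j ∈ univ.erase i, (1 - 2 * T j) := by
  classical
  -- the family of transformed variables, for each target index i
  set φ : Fin n → Fin n → ℝ → ℝ := fun i j => if j = i then hfun else gfun with hφ
  have hφmeas : ∀ i j, Measurable (φ i j) := by
    intro i j; by_cases h : j = i <;> simp [hφ, h, hfun_meas, gfun_meas]
  have hind : ∀ i, iIndepFun
      (fun j ω => φ i j (X j ω)) ℙ :=
    fun i => hindep.comp (fun j => φ i j) (fun j => hφmeas i j)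
  have hae : ∀ i, ∀ᵐ ω ∂ℙ, X i ω = 1/2 ∨ X i ω = 1 ∨ X i ω = 0 :=
    fun i => ae_tri (X i) (hmeas i) (hT i) (hW i) (hL i)
  have hbd : ∀ i j, ∀ᵐ ω ∂ℙ, |φ i j (X j ω)| ≤ 1 := by
    intro i j
    by_cases h : j = i
    · subst h
      filter_upwards [hae j] with ω hω
      rcases hω with hc | hc | hc <;>
        simp only [hφ, if_pos rfl, hfun, gfun, hc] <;> rw [abs_le] <;> norm_num
    · filter_upwards with ω
      simp only [hφ, if_neg h]
      exact gfun_abs _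
  -- pointwise rewriting of the integrand
  have hpt : ∀ ω, (∑ i, X i ω) *
      (-1 : ℝ) ^ (univ.filter (fun i => X i ω = 1/2)).card
      = ∑ i, ∏ j, φ i j (X j ω) := by
    intro ω
    have hprod : (-1 : ℝ) ^ (univ.filter (fun i => X i ω = 1/2)).card
        = ∏ j, gfun (X j ω) := by
      unfold gfun
      rw [Finset.prod_ite, Finset.prod_const, Finset.prod_const, one_pow, mul_one]
    rw [hprod, Finset.sum_mul]
    refine Finset.sum_congr rfl fun i _ => ?_
    rw [← Finset.mul_prod_erase univ (fun j => gfun (X j ω)) (mem_univ i),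
      ← Finset.mul_prod_erase univ (fun j => φ i j (X j ω)) (mem_univ i)]
    have h1 : φ i i (X i ω) = X i ω * gfun (X i ω) := by simp [hφ, hfun]
    have h2 : ∏ j ∈ univ.erase i, φ i j (X j ω)
        = ∏ j ∈ univ.erase i, gfun (X j ω) :=
      Finset.prod_congr rfl fun j hj => by
        simp [hφ, if_neg (Finset.ne_of_mem_erase hj)]
    rw [h1, h2, mul_assoc]
  simp only [hpt] at hb
  -- integrability and product formula for each term
  have hmain := fun i => integral_prod_of_indep (fun j ω => φ i j (X j ω))
    (fun j => (hφmeas i j).comp (hmeas j)) (hind i) (hbd i) univ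
  rw [hb, integral_finset_sum univ (fun i _ => (hmain i).2.1)]
  refine Finset.sum_congr rfl fun i _ => ?_
  rw [(hmain i).2.2, ← Finset.mul_prod_erase univ (fun j => ∫ ω, φ i j (X j ω) ∂ℙ)
    (mem_univ i)]
  have h1 : ∫ ω, φ i i (X i ω) ∂ℙ = W i - T i / 2 := by
    simp only [hφ, if_pos rfl]
    exact integral_hfun (X i) (hmeas i) (hT i) (hW i) (hL i)
  have h2 : ∏ j ∈ univ.erase i, (∫ ω, φ i j (X j ω) ∂ℙ)
      = ∏ j ∈ univ.erase i, (1 - 2 * T j) := by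
    refine Finset.prod_congr rfl fun j hj => ?_
    simp only [hφ, if_neg (Finset.ne_of_mem_erase hj)]
    rw [integral_gfun (X j) (hmeas j), hT j]
  rw [h1, h2]
end

section
/- P(X ∈ ℤ) = (1 + a)/2, E[X·1_{X ∈ ℤ}] = (μ + b)/2, P(X ∈ ℤ + 1/2) = (1 − a)/2, and E[X·1_{X ∈ ℤ + 1/2}] = (μ − b)/2. -/
open MeasureTheory ProbabilityTheory Finset
open scoped Classical

/-- `P(X ∈ ℤ) = (1+a)/2`, `E[X·1_{X∈ℤ}] = (μ+b)/2`,
`P(X ∈ ℤ+1/2) = (1-a)/2`, and `E[X·1_{X∈ℤ+1/2}] = (μ-b)/2`. -/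
theorem poisson_trinomial_parity_probabilities
    {Ω : Type*} [MeasureSpace Ω] [IsProbabilityMeasure (ℙ : Measure Ω)]
    {n : ℕ} (X : Fin n → Ω → ℝ) (T W : Fin n → ℝ)
    (hmeas : ∀ i, Measurable (X i))
    (hindep : iIndepFun X ℙ)
    (hT0 : ∀ i, 0 ≤ T i) (hW0 : ∀ i, 0 ≤ W i) (hTW1 : ∀ i, T i + W i ≤ 1)
    (hT : ∀ i, (ℙ {ω | X i ω = 1/2}).toReal = T i)
    (hW : ∀ i, (ℙ {ω | X i ω = 1}).toReal = W i)
    (hL : ∀ i, (ℙ {ω | X i ω = 0}).toReal = 1 - T i - W i)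
    (μ a b : ℝ)
    (hμ : μ = ∫ ω, ∑ i, X i ω ∂ℙ)
    (ha : a = ∫ ω, (-1 : ℝ) ^ (univ.filter (fun i => X i ω = 1/2)).card ∂ℙ)
    (hb : b = ∫ ω, (∑ i, X i ω) *
        (-1 : ℝ) ^ (univ.filter (fun i => X i ω = 1/2)).card ∂ℙ) :
    (ℙ {ω | ∃ m : ℤ, (∑ i, X i ω) = (m : ℝ)}).toReal = (1 + a) / 2 ∧
    (∫ ω in {ω | ∃ m : ℤ, (∑ i, X i ω) = (m : ℝ)}, ∑ i, X i ω ∂ℙ) = (μ + b) / 2 ∧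
    (ℙ {ω | ∃ m : ℤ, (∑ i, X i ω) = (m : ℝ) + 1/2}).toReal = (1 - a) / 2 ∧
    (∫ ω in {ω | ∃ m : ℤ, (∑ i, X i ω) = (m : ℝ) + 1/2}, ∑ i, X i ω ∂ℙ)
      = (μ - b) / 2 := by
  classical
  set A : Set Ω := {ω | ∃ m : ℤ, (∑ i, X i ω) = (m : ℝ)} with hA_def
  set B : Set Ω := {ω | ∃ m : ℤ, (∑ i, X i ω) = (m : ℝ) + 1/2} with hB_def
  set g : Ω → ℝ := fun ω => (-1 : ℝ) ^ (univ.filter (fun i => X i ω = 1/2)).card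
    with hg_def
  -- measurability of the sum
  have hfm : Measurable (fun ω => ∑ i, X i ω) :=
    Finset.measurable_sum _ fun i _ => hmeas i
  -- measurability of g
  have hgm : Measurable g := by
    have : g = fun ω => ∏ i, (if X i ω = 1/2 then (-1 : ℝ) else 1) := by
      funext ω
      rw [hg_def, Finset.prod_ite, Finset.prod_const, Finset.prod_const, one_pow, mul_one]
    rw [this]
    exact Finset.measurable_prod _ fun i _ =>
      Measurable.ite (hmeas i (measurableSet_singleton (1/2 : ℝ))) measurable_const
        measurable_const
  -- a.e. each X i takes values in {0, 1/2, 1}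
  have hG : ∀ᵐ ω ∂ℙ, ∀ i, X i ω = 0 ∨ X i ω = 1/2 ∨ X i ω = 1 := by
    rw [ae_all_iff]
    intro i
    have h0 : MeasurableSet {ω | X i ω = 0} := hmeas i (measurableSet_singleton 0)
    have hh : MeasurableSet {ω | X i ω = 1/2} := hmeas i (measurableSet_singleton (1/2))
    have h1 : MeasurableSet {ω | X i ω = 1} := hmeas i (measurableSet_singleton 1)
    set U : Set Ω := {ω | X i ω = 0} ∪ {ω | X i ω = 1/2} ∪ {ω | X i ω = 1} with hU_def
    have hUm : MeasurableSet U := (h0.union hh).union h1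
    have hd1 : Disjoint {ω | X i ω = 0} {ω | X i ω = 1/2} := by
      rw [Set.disjoint_left]
      rintro ω hω1 hω2
      simp only [Set.mem_setOf_eq] at hω1 hω2
      rw [hω1] at hω2; norm_num at hω2
    have hd2 : Disjoint ({ω | X i ω = 0} ∪ {ω | X i ω = 1/2}) {ω | X i ω = 1} := by
      rw [Set.disjoint_left]
      rintro ω (hω1 | hω1) hω2 <;>
        simp only [Set.mem_setOf_eq] at hω1 hω2 <;> rw [hω1] at hω2 <;> norm_num at hω2
    have hUval : (ℙ U).toReal = 1 := by
      rw [hU_def, measure_union hd2 h1, measure_union hd1 hh,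
        ENNReal.toReal_add (by finiteness) (by finiteness),
        ENNReal.toReal_add (by finiteness) (by finiteness), hL i, hT i, hW i]
      ring
    have hU1 : ℙ U = 1 := (ENNReal.toReal_eq_one_iff _).mp hUval
    have hcomp : ℙ Uᶜ = 0 := by
      rw [measure_compl hUm (by finiteness), hU1, measure_univ, tsub_self]
    have hset : {ω | ¬(X i ω = 0 ∨ X i ω = 1/2 ∨ X i ω = 1)} = Uᶜ := by
      ext ω
      simp only [hU_def, Set.mem_compl_iff, Set.mem_union, Set.mem_setOf_eq]
      tauto
    rw [ae_iff, hset]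
    exact hcomp
  -- key a.e. dichotomy
  have hcase : ∀ᵐ ω ∂ℙ, (ω ∈ A ∧ ω ∉ B ∧ g ω = 1) ∨ (ω ∉ A ∧ ω ∈ B ∧ g ω = -1) := by
    filter_upwards [hG] with ω trich
    obtain ⟨k, hk⟩ : ∃ k : ℤ,
        (∑ i, X i ω) = (k : ℝ) + ((univ.filter fun i => X i ω = 1/2).card : ℝ) / 2 := by
      refine ⟨((univ.filter fun i => X i ω = 1).card : ℤ), ?_⟩
      have hrep : ∀ i, X i ω =
          (if X i ω = 1 then (1 : ℝ) else 0) + (if X i ω = 1/2 then (1 : ℝ) else 0) / 2 := by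
        intro i
        rcases trich i with h | h | h <;> rw [h] <;> norm_num
      rw [Finset.sum_congr rfl fun i _ => hrep i, Finset.sum_add_distrib]
      congr 1
      · push_cast
        simp [Finset.sum_boole]
      · rw [← Finset.sum_div]
        congr 1
        simp [Finset.sum_boole]
    set S : ℕ := (univ.filter fun i => X i ω = 1/2).card with hS_def
    rcases Nat.even_or_odd S with ⟨s, hs⟩ | ⟨s, hs⟩
    · left
      have hSr : (S : ℝ) = s + s := by rw [hs]; push_cast; ring
      refine ⟨⟨k + s, ?_⟩, ?_, ?_⟩
      · show (∑ i, X i ω) = ((k + (s : ℤ) : ℤ) : ℝ)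
        rw [hk, hSr]; push_cast; ring
      · rintro ⟨m, hm⟩
        have h1 : ((2 * (k + (s : ℤ) - m) : ℤ) : ℝ) = 1 := by
          push_cast
          rw [hk, hSr] at hm
          linarith
        have h2 : (2 * (k + (s : ℤ) - m) : ℤ) = 1 := by exact_mod_cast h1
        omega
      · show (-1 : ℝ) ^ S = 1
        exact Even.neg_one_pow ⟨s, hs⟩
    · right
      have hSr : (S : ℝ) = 2 * s + 1 := by rw [hs]; push_cast; ring
      refine ⟨?_, ⟨k + s, ?_⟩, ?_⟩
      · rintro ⟨m, hm⟩
        have h1 : ((2 * (m - k - (s : ℤ)) : ℤ) : ℝ) = 1 := by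
          push_cast
          rw [hk, hSr] at hm
          linarith
        have h2 : (2 * (m - k - (s : ℤ)) : ℤ) = 1 := by exact_mod_cast h1
        omega
      · show (∑ i, X i ω) = ((k + (s : ℤ) : ℤ) : ℝ) + 1/2
        rw [hk, hSr]; push_cast; ring
      · show (-1 : ℝ) ^ S = -1
        exact Odd.neg_one_pow ⟨s, hs⟩
  -- measurability of A and B
  have hA : MeasurableSet A := by
    have : A = (fun ω => ∑ i, X i ω) ⁻¹' (Set.range ((↑) : ℤ → ℝ)) := by
      ext ω
      simp [hA_def, eq_comm]
    rw [this]
    exact hfm (Set.countable_range _).measurableSet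
  have hB : MeasurableSet B := by
    have : B = (fun ω => ∑ i, X i ω) ⁻¹' (Set.range (fun m : ℤ => (m : ℝ) + 1/2)) := by
      ext ω
      simp [hB_def, eq_comm]
    rw [this]
    exact hfm (Set.countable_range _).measurableSet
  -- integrability
  have hXint : ∀ i, Integrable (X i) ℙ := by
    intro i
    refine Integrable.mono' (integrable_const 1) (hmeas i).aestronglyMeasurable ?_
    filter_upwards [hG] with ω h
    rcases h i with h' | h' | h' <;> rw [h'] <;> norm_num
  have hf_int : Integrable (fun ω => ∑ i, X i ω) ℙ :=
    integrable_finset_sum _ fun i _ => hXint i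
  have hgabs : ∀ ω, |g ω| = 1 := by
    intro ω
    rw [hg_def]
    rw [abs_pow, abs_neg, abs_one, one_pow]
  have hg_int : Integrable g ℙ := by
    refine Integrable.mono' (integrable_const 1) hgm.aestronglyMeasurable ?_
    filter_upwards with ω
    rw [Real.norm_eq_abs, hgabs ω]
  have hfg_int : Integrable (fun ω => (∑ i, X i ω) * g ω) ℙ := by
    refine Integrable.mono' (integrable_const (n : ℝ)) (hfm.mul hgm).aestronglyMeasurable ?_
    filter_upwards [hG] with ω h
    rw [Real.norm_eq_abs, abs_mul, hgabs ω, mul_one]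
    calc |∑ i, X i ω| ≤ ∑ i, |X i ω| := Finset.abs_sum_le_sum_abs _ _
      _ ≤ ∑ _i : Fin n, (1 : ℝ) := by
          refine Finset.sum_le_sum fun i _ => ?_
          rcases h i with h' | h' | h' <;>
            rw [h', abs_of_nonneg (by norm_num)] <;> norm_num
      _ = n := by simp
  have hμ' : μ = ∫ ω, ∑ i, X i ω ∂ℙ := hμ
  have hb' : b = ∫ ω, (∑ i, X i ω) * g ω ∂ℙ := hb
  have ha' : a = ∫ ω, g ω ∂ℙ := ha
  refine ⟨?_, ?_, ?_, ?_⟩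
  · rw [← measureReal_def, ← integral_indicator_one hA,
      integral_congr_ae (g := fun ω => (1 + g ω) / 2) ?_, integral_div,
      integral_add (integrable_const 1) hg_int, integral_const, probReal_univ, ha']
    · simp
    · filter_upwards [hcase] with ω h
      rcases h with ⟨hxa, _, hg1⟩ | ⟨hxa, _, hg1⟩
      · rw [Set.indicator_of_mem hxa, hg1]; norm_num
      · rw [Set.indicator_of_notMem hxa, hg1]; norm_num
  · rw [← integral_indicator hA,
      integral_congr_ae (g := fun ω => ((∑ i, X i ω) + (∑ i, X i ω) * g ω) / 2) ?_,
      integral_div, integral_add hf_int hfg_int, ← hμ', ← hb']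
    filter_upwards [hcase] with ω h
    rcases h with ⟨hxa, _, hg1⟩ | ⟨hxa, _, hg1⟩
    · rw [Set.indicator_of_mem hxa, hg1]; ring
    · rw [Set.indicator_of_notMem hxa, hg1]; ring
  · rw [← measureReal_def, ← integral_indicator_one hB,
      integral_congr_ae (g := fun ω => (1 - g ω) / 2) ?_, integral_div,
      integral_sub (integrable_const 1) hg_int, integral_const, probReal_univ, ha']
    · simp
    · filter_upwards [hcase] with ω h
      rcases h with ⟨_, hxb, hg1⟩ | ⟨_, hxb, hg1⟩
      · rw [Set.indicator_of_notMem hxb, hg1]; norm_num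
      · rw [Set.indicator_of_mem hxb, hg1]; norm_num
  · rw [← integral_indicator hB,
      integral_congr_ae (g := fun ω => ((∑ i, X i ω) - (∑ i, X i ω) * g ω) / 2) ?_,
      integral_div, integral_sub hf_int hfg_int, ← hμ', ← hb']
    filter_upwards [hcase] with ω h
    rcases h with ⟨_, hxb, hg1⟩ | ⟨_, hxb, hg1⟩
    · rw [Set.indicator_of_notMem hxb, hg1]; ring
    · rw [Set.indicator_of_mem hxb, hg1]; ring
end

section
/- b − aμ = ∑_{i=1}^n T_i (W_i − L_i) · ∏_{j≠i} (1 − 2T_j). -/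
open MeasureTheory ProbabilityTheory Finset
open scoped Classical

lemma aux_integral_prod {Ω : Type*} [MeasureSpace Ω] [IsProbabilityMeasure (ℙ : Measure Ω)]
    {n : ℕ} (Z : Fin n → Ω → ℝ) (hmeas : ∀ i, Measurable (Z i))
    (hindep : iIndepFun Z ℙ) (s : Finset (Fin n)) :
    ∫ ω, ∏ j ∈ s, Z j ω ∂ℙ = ∏ j ∈ s, ∫ ω, Z j ω ∂ℙ := by
  classical
  induction s using Finset.induction_on with
  | empty => simp
  | @insert i s hi ih =>
    have hfun : (∏ j ∈ s, Z j) = fun ω => ∏ j ∈ s, Z j ω :=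
      funext fun ω => Finset.prod_apply _ _ _
    have hindep2 : IndepFun (Z i) (fun ω => ∏ j ∈ s, Z j ω) ℙ := by
      rw [← hfun]
      exact (hindep.indepFun_finsetProd_of_notMem hmeas hi).symm
    have h1 : (∫ ω, ∏ j ∈ insert i s, Z j ω ∂ℙ)
        = ∫ ω, Z i ω * (∏ j ∈ s, Z j ω) ∂ℙ := by
      refine integral_congr_ae (Filter.EventuallyEq.of_eq (funext fun ω => ?_))
      rw [Finset.prod_insert hi]
    have hmp : Measurable fun ω => ∏ j ∈ s, Z j ω :=
      Finset.measurable_prod _ fun j _ => hmeas j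
    rw [Finset.prod_insert hi, h1,
      hindep2.integral_fun_mul_eq_mul_integral (hmeas i).aestronglyMeasurable hmp.aestronglyMeasurable, ← ih]

lemma aux_ae_three {Ω : Type*} [MeasureSpace Ω] [IsProbabilityMeasure (ℙ : Measure Ω)]
    (Xi : Ω → ℝ) (hm : Measurable Xi)
    (h1 : (ℙ {ω | Xi ω = 1/2}).toReal + (ℙ {ω | Xi ω = 1}).toReal
        + (ℙ {ω | Xi ω = 0}).toReal = 1) :
    ∀ᵐ ω ∂(ℙ : Measure Ω), Xi ω = 0 ∨ Xi ω = 1/2 ∨ Xi ω = 1 := by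
  set A : Set Ω := {ω | Xi ω = 1/2} with hA
  set B : Set Ω := {ω | Xi ω = 1} with hB
  set C : Set Ω := {ω | Xi ω = 0} with hC
  have hAm : MeasurableSet A := hm (measurableSet_singleton _)
  have hBm : MeasurableSet B := hm (measurableSet_singleton _)
  have hCm : MeasurableSet C := hm (measurableSet_singleton _)
  have hdAB : Disjoint A B := by
    rw [Set.disjoint_left]
    intro ω hωA hωB
    simp only [hA, hB, Set.mem_setOf_eq] at hωA hωB
    rw [hωA] at hωB; norm_num at hωB
  have hdABC : Disjoint (A ∪ B) C := by
    rw [Set.disjoint_left]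
    intro ω hω hωC
    simp only [hA, hB, hC, Set.mem_union, Set.mem_setOf_eq] at hω hωC
    rcases hω with h | h <;> rw [hωC] at h <;> norm_num at h
  have hmeasU : ℙ (A ∪ B ∪ C) = ℙ A + ℙ B + ℙ C := by
    rw [measure_union hdABC hCm, measure_union hdAB hBm]
  have hfin : ∀ s : Set Ω, ℙ s ≠ ⊤ := fun s => measure_ne_top _ _
  have htr : (ℙ (A ∪ B ∪ C)).toReal = 1 := by
    rw [hmeasU, ENNReal.toReal_add (by finiteness) (by finiteness),
      ENNReal.toReal_add (by finiteness) (by finiteness)]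
    exact h1
  have hone : ℙ (A ∪ B ∪ C) = 1 := (ENNReal.toReal_eq_one_iff _).mp htr
  have hcompl : ℙ (A ∪ B ∪ C)ᶜ = 0 :=
    (prob_compl_eq_zero_iff ((hAm.union hBm).union hCm)).mpr hone
  rw [ae_iff]
  convert hcompl using 2
  ext ω
  simp only [hA, hB, hC, Set.mem_compl_iff, Set.mem_union, Set.mem_setOf_eq]
  tauto

lemma aux_exp_three {Ω : Type*} [MeasureSpace Ω] [IsProbabilityMeasure (ℙ : Measure Ω)]
    (Xi : Ω → ℝ) (hm : Measurable Xi) (ψ : ℝ → ℝ)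
    (hae : ∀ᵐ ω ∂(ℙ : Measure Ω), Xi ω = 0 ∨ Xi ω = 1/2 ∨ Xi ω = 1) :
    ∫ ω, ψ (Xi ω) ∂ℙ = ψ (1/2) * (ℙ {ω | Xi ω = 1/2}).toReal
      + ψ 1 * (ℙ {ω | Xi ω = 1}).toReal + ψ 0 * (ℙ {ω | Xi ω = 0}).toReal := by
  have hAm : MeasurableSet {ω | Xi ω = 1/2} := hm (measurableSet_singleton _)
  have hBm : MeasurableSet {ω | Xi ω = 1} := hm (measurableSet_singleton _)
  have hCm : MeasurableSet {ω | Xi ω = 0} := hm (measurableSet_singleton _)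
  have heq : ∀ᵐ ω ∂(ℙ : Measure Ω), ψ (Xi ω)
      = Set.indicator {ω | Xi ω = 1/2} (fun _ => ψ (1/2)) ω
        + Set.indicator {ω | Xi ω = 1} (fun _ => ψ 1) ω
        + Set.indicator {ω | Xi ω = 0} (fun _ => ψ 0) ω := by
    filter_upwards [hae] with ω hω
    rcases hω with h | h | h <;>
      · simp only [Set.indicator_apply, Set.mem_setOf_eq, h]
        norm_num
  have hiA : Integrable (Set.indicator {ω | Xi ω = 1/2} (fun _ => ψ (1/2)))
      (ℙ : Measure Ω) := (integrable_const _).indicator hAm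
  have hiB : Integrable (Set.indicator {ω | Xi ω = 1} (fun _ => ψ 1))
      (ℙ : Measure Ω) := (integrable_const _).indicator hBm
  have hiC : Integrable (Set.indicator {ω | Xi ω = 0} (fun _ => ψ 0))
      (ℙ : Measure Ω) := (integrable_const _).indicator hCm
  have hiAB : Integrable (fun ω => Set.indicator {ω | Xi ω = 1/2} (fun _ => ψ (1/2)) ω
      + Set.indicator {ω | Xi ω = 1} (fun _ => ψ 1) ω) (ℙ : Measure Ω) := hiA.add hiB
  rw [integral_congr_ae heq, integral_add hiAB hiC, integral_add hiA hiB,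
    integral_indicator_const _ hAm, integral_indicator_const _ hBm,
    integral_indicator_const _ hCm]
  simp [smul_eq_mul, mul_comm, measureReal_def]

/-- `b - aμ = ∑_i T_i (W_i - L_i) ∏_{j ≠ i} (1 - 2 T_j)`. -/
theorem poisson_trinomial_b_sub_a_mul_mu
    {Ω : Type*} [MeasureSpace Ω] [IsProbabilityMeasure (ℙ : Measure Ω)]
    {n : ℕ} (X : Fin n → Ω → ℝ) (T W : Fin n → ℝ)
    (hmeas : ∀ i, Measurable (X i))
    (hindep : iIndepFun X ℙ)
    (hT0 : ∀ i, 0 ≤ T i) (hW0 : ∀ i, 0 ≤ W i) (hTW1 : ∀ i, T i + W i ≤ 1)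
    (hT : ∀ i, (ℙ {ω | X i ω = 1/2}).toReal = T i)
    (hW : ∀ i, (ℙ {ω | X i ω = 1}).toReal = W i)
    (hL : ∀ i, (ℙ {ω | X i ω = 0}).toReal = 1 - T i - W i)
    (μ a b : ℝ)
    (hμ : μ = ∫ ω, ∑ i, X i ω ∂ℙ)
    (ha : a = ∫ ω, (-1 : ℝ) ^ (univ.filter (fun i => X i ω = 1/2)).card ∂ℙ)
    (hb : b = ∫ ω, (∑ i, X i ω) *
        (-1 : ℝ) ^ (univ.filter (fun i => X i ω = 1/2)).card ∂ℙ) :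
    b - a * μ = ∑ i, T i * (W i - (1 - T i - W i)) *
        ∏ j ∈ univ.erase i, (1 - 2 * T j) := by
  classical
  set g : ℝ → ℝ := fun x => if x = 1/2 then -1 else 1 with hg
  have hgmeas : Measurable g :=
    Measurable.ite (measurableSet_eq) measurable_const measurable_const
  have hgle : ∀ x, |g x| ≤ 1 := by
    intro x
    simp only [hg]
    split <;> norm_num
  have hae : ∀ i, ∀ᵐ ω ∂(ℙ : Measure Ω), X i ω = 0 ∨ X i ω = 1/2 ∨ X i ω = 1 := fun i =>
    aux_ae_three (X i) (hmeas i) (by rw [hT, hW, hL]; ring)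
  -- single expectations
  have hEg : ∀ i, ∫ ω, g (X i ω) ∂ℙ = 1 - 2 * T i := by
    intro i
    rw [aux_exp_three (X i) (hmeas i) g (hae i), hT, hW, hL]
    have e1 : g (1/2) = -1 := by simp [hg]
    have e2 : g 1 = 1 := by norm_num [hg]
    have e3 : g 0 = 1 := by norm_num [hg]
    rw [e1, e2, e3]; ring
  have hEX : ∀ i, ∫ ω, X i ω ∂ℙ = T i / 2 + W i := by
    intro i
    have := aux_exp_three (X i) (hmeas i) (fun x => x) (hae i)
    rw [hT, hW, hL] at this
    exact this.trans (by ring)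
  have hEφ : ∀ i, ∫ ω, X i ω * g (X i ω) ∂ℙ = W i - T i / 2 := by
    intro i
    have := aux_exp_three (X i) (hmeas i) (fun x => x * g x) (hae i)
    rw [hT, hW, hL] at this
    have e1 : g (1/2) = -1 := by simp [hg]
    have e2 : g 1 = 1 := by norm_num [hg]
    have e3 : g 0 = 1 := by norm_num [hg]
    simp only [e1, e2, e3] at this
    exact this.trans (by ring)
  -- sign as a product
  have hsign : ∀ ω, ((-1 : ℝ)) ^ (univ.filter (fun i => X i ω = 1/2)).card
      = ∏ j, g (X j ω) := by
    intro ω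
    simp only [hg]
    rw [Finset.prod_ite, Finset.prod_const, Finset.prod_const, one_pow, mul_one]
  -- a
  have hYindep : iIndepFun (fun j => g ∘ X j) ℙ :=
    hindep.comp (fun _ => g) (fun _ => hgmeas)
  have ha' : a = ∏ j, (1 - 2 * T j) := by
    rw [ha]
    have h1 : (∫ ω, (-1 : ℝ) ^ (univ.filter (fun i => X i ω = 1/2)).card ∂ℙ)
        = ∫ ω, ∏ j, g (X j ω) ∂ℙ :=
      integral_congr_ae (Filter.EventuallyEq.of_eq (funext fun ω => hsign ω))
    rw [h1]
    have h2 := aux_integral_prod (fun j ω => g (X j ω))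
      (fun j => hgmeas.comp (hmeas j)) hYindep univ
    exact h2.trans (Finset.prod_congr rfl fun j _ => hEg j)
  -- μ
  have hintX : ∀ i, Integrable (X i) (ℙ : Measure Ω) := by
    intro i
    refine (integrable_const (1 : ℝ)).mono' (hmeas i).aestronglyMeasurable ?_
    filter_upwards [hae i] with ω hω
    rcases hω with h | h | h <;> rw [Real.norm_eq_abs, h] <;> norm_num [abs_le]
  have hμ' : μ = ∑ i, (T i / 2 + W i) := by
    rw [hμ, integral_finset_sum _ fun i _ => hintX i]
    exact Finset.sum_congr rfl fun i _ => hEX i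
  -- b
  have hb' : b = ∑ i, (W i - T i / 2) * ∏ j ∈ univ.erase i, (1 - 2 * T j) := by
    rw [hb]
    have h1 : (∫ ω, (∑ i, X i ω) *
          (-1 : ℝ) ^ (univ.filter (fun i => X i ω = 1/2)).card ∂ℙ)
        = ∫ ω, ∑ i, (X i ω * g (X i ω)) * ∏ j ∈ univ.erase i, g (X j ω) ∂ℙ := by
      refine integral_congr_ae (Filter.EventuallyEq.of_eq (funext fun ω => ?_))
      rw [hsign ω, Finset.sum_mul]
      refine Finset.sum_congr rfl fun i _ => ?_
      rw [← Finset.mul_prod_erase univ (fun j => g (X j ω)) (Finset.mem_univ i),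
        ← mul_assoc]
    have hterm_int : ∀ i : Fin n, Integrable
        (fun ω => (X i ω * g (X i ω)) * ∏ j ∈ univ.erase i, g (X j ω))
        (ℙ : Measure Ω) := by
      intro i
      have hm1 : Measurable fun ω => (X i ω * g (X i ω))
          * ∏ j ∈ univ.erase i, g (X j ω) :=
        ((hmeas i).mul (hgmeas.comp (hmeas i))).mul
          (Finset.measurable_prod _ fun j _ => hgmeas.comp (hmeas j))
      refine (integrable_const (1 : ℝ)).mono' hm1.aestronglyMeasurable ?_
      filter_upwards [hae i] with ω hω
      rw [Real.norm_eq_abs, abs_mul, abs_mul]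
      have h1 : |X i ω| ≤ 1 := by
        rcases hω with h | h | h <;> rw [h] <;> norm_num [abs_le]
      have h2 : |∏ j ∈ univ.erase i, g (X j ω)| ≤ 1 := by
        rw [Finset.abs_prod]
        exact Finset.prod_le_one (fun _ _ => abs_nonneg _) (fun j _ => hgle _)
      exact mul_le_one₀ (mul_le_one₀ h1 (abs_nonneg _) (hgle _)) (abs_nonneg _) h2
    rw [h1, integral_finset_sum _ fun i _ => hterm_int i]
    refine Finset.sum_congr rfl fun i _ => ?_
    -- independence argument for term i
    set F : Fin n → ℝ → ℝ := fun j => if j = i then (fun x => x * g x) else g with hF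
    have hFmeas : ∀ j, Measurable (F j) := by
      intro j
      simp only [hF]
      split
      · exact measurable_id.mul hgmeas
      · exact hgmeas
    set Z : Fin n → Ω → ℝ := fun j => F j ∘ X j with hZ
    have hZmeas : ∀ j, Measurable (Z j) := fun j => (hFmeas j).comp (hmeas j)
    have hZindep : iIndepFun Z ℙ := hindep.comp F hFmeas
    have hZi : ∀ ω, Z i ω = X i ω * g (X i ω) := by
      intro ω; simp [hZ, hF]
    have hZj : ∀ j ∈ univ.erase i, Z j = g ∘ X j := by
      intro j hj
      have : j ≠ i := Finset.ne_of_mem_erase hj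
      simp [hZ, hF, this]
    have hfun : (∏ j ∈ univ.erase i, Z j) = fun ω => ∏ j ∈ univ.erase i, Z j ω :=
      funext fun ω => Finset.prod_apply _ _ _
    have hindep2 : IndepFun (Z i) (fun ω => ∏ j ∈ univ.erase i, Z j ω) ℙ := by
      rw [← hfun]
      exact (hZindep.indepFun_finsetProd_of_notMem hZmeas
        (Finset.notMem_erase i univ)).symm
    have h2 : (∫ ω, (X i ω * g (X i ω)) * ∏ j ∈ univ.erase i, g (X j ω) ∂ℙ)
        = ∫ ω, Z i ω * (∏ j ∈ univ.erase i, Z j ω) ∂ℙ := by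
      refine integral_congr_ae (Filter.EventuallyEq.of_eq (funext fun ω => ?_))
      rw [hZi ω]
      congr 1
      exact (Finset.prod_congr rfl fun j hj => by rw [hZj j hj]; rfl).symm
    have hmp : Measurable fun ω => ∏ j ∈ univ.erase i, Z j ω :=
      Finset.measurable_prod _ fun j _ => hZmeas j
    rw [h2, hindep2.integral_fun_mul_eq_mul_integral (hZmeas i).aestronglyMeasurable hmp.aestronglyMeasurable]
    have h3 : (∫ ω, Z i ω ∂ℙ) = W i - T i / 2 := by
      have : (fun ω => Z i ω) = fun ω => X i ω * g (X i ω) := funext hZi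
      rw [show (∫ ω, Z i ω ∂ℙ) = ∫ ω, X i ω * g (X i ω) ∂ℙ from
        integral_congr_ae (Filter.EventuallyEq.of_eq this), hEφ i]
    have h4 : (∫ ω, ∏ j ∈ univ.erase i, Z j ω ∂ℙ)
        = ∏ j ∈ univ.erase i, (1 - 2 * T j) := by
      rw [aux_integral_prod Z hZmeas hZindep (univ.erase i)]
      refine Finset.prod_congr rfl fun j hj => ?_
      rw [show (∫ ω, Z j ω ∂ℙ) = ∫ ω, g (X j ω) ∂ℙ from
        integral_congr_ae (Filter.EventuallyEq.of_eq (by rw [hZj j hj]; rfl)), hEg j]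
    rw [h3, h4]
  -- final algebra
  rw [ha', hμ', hb', Finset.mul_sum, ← Finset.sum_sub_distrib]
  refine Finset.sum_congr rfl fun i _ => ?_
  rw [← Finset.mul_prod_erase univ (fun j => 1 - 2 * T j) (Finset.mem_univ i)]
  ring
end

section
/- |b − aμ| ≤ (1 − |a|)/2. -/
open MeasureTheory ProbabilityTheory Finset
open scoped Classical

noncomputable def phiF : ℝ → ℝ := fun x => if x = 1/2 then -1 else 1

lemma phiF_meas : Measurable phiF := by
  unfold phiF
  exact Measurable.ite (by simpa [Set.setOf_eq_eq_singleton] using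
    (measurableSet_singleton (1/2 : ℝ))) measurable_const measurable_const

noncomputable def psiF : ℝ → ℝ := fun x => x * phiF x

lemma psiF_meas : Measurable psiF := measurable_id.mul phiF_meas

lemma phiF_zero : phiF 0 = 1 := by norm_num [phiF]
lemma phiF_half : phiF (1/2) = -1 := by norm_num [phiF]
lemma phiF_one : phiF 1 = 1 := by norm_num [phiF]
lemma psiF_zero : psiF 0 = 0 := by norm_num [psiF]
lemma psiF_half : psiF (1/2) = -(1/2) := by norm_num [psiF, phiF]
lemma psiF_one : psiF 1 = 1 := by norm_num [psiF, phiF]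
lemma psiF_apply (x : ℝ) : psiF x = x * phiF x := rfl

section Helpers

variable {Ω : Type*} [MeasureSpace Ω] [IsProbabilityMeasure (ℙ : Measure Ω)]

lemma tri_integral (X : Ω → ℝ) (hm : Measurable X)
    (hfull : ℙ ({ω | X ω = 0} ∪ {ω | X ω = 1/2} ∪ {ω | X ω = 1}) = 1)
    (f : ℝ → ℝ) :
    Integrable (fun ω => f (X ω)) ℙ ∧
    ∫ ω, f (X ω) ∂ℙ = f 0 * (ℙ {ω | X ω = 0}).toReal
      + f (1/2) * (ℙ {ω | X ω = 1/2}).toReal + f 1 * (ℙ {ω | X ω = 1}).toReal := by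
  have hA : MeasurableSet {ω | X ω = 0} := hm (measurableSet_singleton 0)
  have hB : MeasurableSet {ω | X ω = 1/2} := hm (measurableSet_singleton (1/2))
  have hC : MeasurableSet {ω | X ω = 1} := hm (measurableSet_singleton 1)
  set s : Ω → ℝ := fun ω =>
    Set.indicator {ω | X ω = 0} (fun _ => f 0) ω
    + Set.indicator {ω | X ω = 1/2} (fun _ => f (1/2)) ω
    + Set.indicator {ω | X ω = 1} (fun _ => f 1) ω with hs
  have hae : ∀ᵐ ω ∂ℙ, ω ∈ ({ω | X ω = 0} ∪ {ω | X ω = 1/2} ∪ {ω | X ω = 1}) := by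
    exact MeasureTheory.mem_ae_iff.mpr
      ((prob_compl_eq_zero_iff ((hA.union hB).union hC)).mpr hfull)
  have heq : (fun ω => f (X ω)) =ᵐ[ℙ] s := by
    filter_upwards [hae] with ω hω
    rcases hω with (h | h) | h <;>
      · simp only [Set.mem_setOf_eq] at h
        simp only [hs, Set.indicator_apply, Set.mem_setOf_eq, h]
        norm_num
  have hsint : Integrable s ℙ :=
    (((integrable_const (f 0)).indicator hA).add
      ((integrable_const (f (1/2))).indicator hB)).add
      ((integrable_const (f 1)).indicator hC)
  constructor
  · exact hsint.congr heq.symm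
  · have h0 : Integrable (fun ω => Set.indicator {ω | X ω = 0} (fun _ => f 0) ω) ℙ :=
      (integrable_const (f 0)).indicator hA
    have h1 : Integrable (fun ω => Set.indicator {ω | X ω = 1/2} (fun _ => f (1/2)) ω) ℙ :=
      (integrable_const (f (1/2))).indicator hB
    have h2 : Integrable (fun ω => Set.indicator {ω | X ω = 1} (fun _ => f 1) ω) ℙ :=
      (integrable_const (f 1)).indicator hC
    have h01 : Integrable (fun ω => Set.indicator {ω | X ω = 0} (fun _ => f 0) ω
        + Set.indicator {ω | X ω = 1/2} (fun _ => f (1/2)) ω) ℙ := h0.add h1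
    rw [integral_congr_ae heq]
    simp only [hs]
    rw [integral_add h01 h2, integral_add h0 h1,
      integral_indicator_const _ hA, integral_indicator_const _ hB,
      integral_indicator_const _ hC]
    simp [mul_comm]
    rfl

lemma prod_integral_of_indep {n : ℕ} (Z : Fin n → Ω → ℝ) (hm : ∀ i, Measurable (Z i))
    (hint : ∀ i, Integrable (Z i) ℙ)
    (hind : iIndepFun Z ℙ) (s : Finset (Fin n)) :
    Integrable (fun ω => ∏ i ∈ s, Z i ω) ℙ ∧
    ∫ ω, ∏ i ∈ s, Z i ω ∂ℙ = ∏ i ∈ s, ∫ ω, Z i ω ∂ℙ := by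
  induction s using Finset.cons_induction with
  | empty => simp
  | cons i s hi ih =>
    have hdep : IndepFun (Z i) (∏ j ∈ s, Z j) ℙ :=
      (hind.indepFun_finsetProd_of_notMem hm hi).symm
    have hPeq : (∏ j ∈ s, Z j) = (fun ω => ∏ j ∈ s, Z j ω) := by
      funext ω; simp
    rw [hPeq] at hdep
    have hInt : Integrable (fun ω => Z i ω * ∏ j ∈ s, Z j ω) ℙ :=
      hdep.integrable_mul (hint i) ih.1
    have hkey : (fun ω => ∏ j ∈ cons i s hi, Z j ω)
        = (fun ω => Z i ω * ∏ j ∈ s, Z j ω) := by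
      funext ω; rw [Finset.prod_cons]
    constructor
    · rw [hkey]; exact hInt
    · calc ∫ ω, ∏ j ∈ cons i s hi, Z j ω ∂ℙ
          = ∫ ω, Z i ω * ∏ j ∈ s, Z j ω ∂ℙ := by rw [hkey]
        _ = (∫ ω, Z i ω ∂ℙ) * ∫ ω, ∏ j ∈ s, Z j ω ∂ℙ :=
            hdep.integral_fun_mul_eq_mul_integral (hint i).aestronglyMeasurable ih.1.aestronglyMeasurable
        _ = ∏ j ∈ cons i s hi, ∫ ω, Z j ω ∂ℙ := by rw [Finset.prod_cons, ih.2]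

end Helpers

lemma sum_one_sub_mul_prod_le {ι : Type*} [DecidableEq ι] (s : Finset ι) (t : ι → ℝ)
    (h0 : ∀ i ∈ s, 0 ≤ t i) (h1 : ∀ i ∈ s, t i ≤ 1) :
    ∑ i ∈ s, (1 - t i) * ∏ j ∈ s.erase i, t j ≤ 1 - ∏ j ∈ s, t j := by
  induction s using Finset.cons_induction with
  | empty => simp
  | cons k s hk ih =>
    have h0' : ∀ i ∈ s, 0 ≤ t i := fun i hi => h0 i (mem_cons_of_mem hi)
    have h1' : ∀ i ∈ s, t i ≤ 1 := fun i hi => h1 i (mem_cons_of_mem hi)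
    have hP0 : 0 ≤ ∏ j ∈ s, t j := Finset.prod_nonneg h0'
    have hP1 : ∏ j ∈ s, t j ≤ 1 := Finset.prod_le_one h0' h1'
    have htk0 : 0 ≤ t k := h0 k (mem_cons_self k s)
    have htk1 : t k ≤ 1 := h1 k (mem_cons_self k s)
    have hsum := ih h0' h1'
    rw [Finset.sum_cons, Finset.prod_cons, Finset.erase_cons]
    have hrw : ∑ i ∈ s, (1 - t i) * ∏ j ∈ (cons k s hk).erase i, t j
        = t k * ∑ i ∈ s, (1 - t i) * ∏ j ∈ s.erase i, t j := by
      rw [Finset.mul_sum]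
      refine Finset.sum_congr rfl fun i hi => ?_
      have hik : k ≠ i := fun h => hk (h ▸ hi)
      rw [Finset.cons_eq_insert, Finset.erase_insert_of_ne hik,
        Finset.prod_insert (fun h => hk (Finset.mem_of_mem_erase h))]
      ring
    rw [hrw]
    nlinarith [mul_le_mul_of_nonneg_left hsum htk0]

lemma dbound (T W : ℝ) (hT0 : 0 ≤ T) (hW0 : 0 ≤ W) (hTW : T + W ≤ 1) :
    |(W - T/2) - (T/2 + W) * (1 - 2*T)| ≤ (1 - |1 - 2*T|)/2 := by
  have h : (W - T/2) - (T/2 + W) * (1 - 2*T) = T * (T + 2*W - 1) := by ring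
  rw [h, abs_le]
  rcases abs_cases (1 - 2*T) with ⟨he, _⟩ | ⟨he, _⟩ <;> rw [he] <;> constructor <;>
    nlinarith [mul_nonneg hT0 hW0, mul_nonneg hT0 hT0, mul_nonneg hW0 hW0,
      mul_nonneg hT0 (by linarith : (0:ℝ) ≤ 1 - T - W),
      mul_nonneg hT0 (by linarith : (0:ℝ) ≤ 1 - W),
      mul_nonneg hW0 (by linarith : (0:ℝ) ≤ 1 - T - W),
      sq_nonneg (1 - T), sq_nonneg T]

/-- `|b - aμ| ≤ (1 - |a|)/2`. -/
theorem poisson_trinomial_key_bound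
    {Ω : Type*} [MeasureSpace Ω] [IsProbabilityMeasure (ℙ : Measure Ω)]
    {n : ℕ} (X : Fin n → Ω → ℝ) (T W : Fin n → ℝ)
    (hmeas : ∀ i, Measurable (X i))
    (hindep : iIndepFun X ℙ)
    (hT0 : ∀ i, 0 ≤ T i) (hW0 : ∀ i, 0 ≤ W i) (hTW1 : ∀ i, T i + W i ≤ 1)
    (hT : ∀ i, (ℙ {ω | X i ω = 1/2}).toReal = T i)
    (hW : ∀ i, (ℙ {ω | X i ω = 1}).toReal = W i)
    (hL : ∀ i, (ℙ {ω | X i ω = 0}).toReal = 1 - T i - W i)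
    (μ a b : ℝ)
    (hμ : μ = ∫ ω, ∑ i, X i ω ∂ℙ)
    (ha : a = ∫ ω, (-1 : ℝ) ^ (univ.filter (fun i => X i ω = 1/2)).card ∂ℙ)
    (hb : b = ∫ ω, (∑ i, X i ω) *
        (-1 : ℝ) ^ (univ.filter (fun i => X i ω = 1/2)).card ∂ℙ) :
    |b - a * μ| ≤ (1 - |a|) / 2 := by
  -- full-measure trichotomy
  have hfull : ∀ i, ℙ ({ω | X i ω = 0} ∪ {ω | X i ω = 1/2} ∪ {ω | X i ω = 1}) = 1 := by
    intro i
    have hAm : MeasurableSet {ω | X i ω = 0} := hmeas i (measurableSet_singleton 0)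
    have hBm : MeasurableSet {ω | X i ω = 1/2} := hmeas i (measurableSet_singleton (1/2))
    have hCm : MeasurableSet {ω | X i ω = 1} := hmeas i (measurableSet_singleton 1)
    have hd2 : Disjoint {ω | X i ω = 0} {ω | X i ω = 1/2} := by
      rw [Set.disjoint_left]; rintro ω h1 h2
      simp only [Set.mem_setOf_eq] at h1 h2; rw [h1] at h2; norm_num at h2
    have hd1 : Disjoint ({ω | X i ω = 0} ∪ {ω | X i ω = 1/2}) {ω | X i ω = 1} := by
      rw [Set.disjoint_left]; rintro ω (h1 | h1) h2 <;>
        · simp only [Set.mem_setOf_eq] at h1 h2; rw [h1] at h2; norm_num at h2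
    rw [measure_union hd1 hCm, measure_union hd2 hBm, ← ENNReal.toReal_eq_one_iff,
      ENNReal.toReal_add (ENNReal.add_ne_top.mpr ⟨measure_ne_top _ _, measure_ne_top _ _⟩)
        (measure_ne_top _ _),
      ENNReal.toReal_add (measure_ne_top _ _) (measure_ne_top _ _), hT i, hW i, hL i]
    ring
  have hI := fun i => tri_integral (X i) (hmeas i) (hfull i)
  -- basic integrals
  have hXint : ∀ i, Integrable (X i) ℙ := fun i => (hI i (fun x => x)).1
  have hXval : ∀ i, ∫ ω, X i ω ∂ℙ = T i / 2 + W i := by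
    intro i
    have h := (hI i (fun x => x)).2
    simp only [hT i, hW i, hL i] at h
    beta_reduce at h
    rw [h]; ring
  have hgint : ∀ i, Integrable (fun ω => phiF (X i ω)) ℙ := fun i => (hI i phiF).1
  have hgval : ∀ i, ∫ ω, phiF (X i ω) ∂ℙ = 1 - 2 * T i := by
    intro i
    have h := (hI i phiF).2
    rw [phiF_zero, phiF_half, phiF_one, hT i, hW i, hL i] at h
    rw [h]; ring
  have hψint : ∀ i, Integrable (fun ω => psiF (X i ω)) ℙ := fun i => (hI i psiF).1
  have hψval : ∀ i, ∫ ω, psiF (X i ω) ∂ℙ = W i - T i / 2 := by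
    intro i
    have h := (hI i psiF).2
    rw [psiF_zero, psiF_half, psiF_one, hT i, hW i, hL i] at h
    rw [h]; ring
  -- the sign as a product
  have hpow : ∀ ω, (-1 : ℝ) ^ (univ.filter (fun i => X i ω = 1/2)).card
      = ∏ i, phiF (X i ω) := by
    intro ω
    simp only [phiF]
    rw [Finset.prod_ite, Finset.prod_const, Finset.prod_const_one, mul_one]
  -- independence of the composed family
  have hgm : ∀ i, Measurable (fun ω => phiF (X i ω)) := fun i => phiF_meas.comp (hmeas i)
  have hgind : iIndepFun (fun i (ω : Ω) => phiF (X i ω)) ℙ :=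
    hindep.comp (fun _ => phiF) (fun _ => phiF_meas)
  have hprod := prod_integral_of_indep (fun i ω => phiF (X i ω)) hgm hgint hgind
  -- value of a
  have haval : a = ∏ i, (1 - 2 * T i) := by
    rw [ha]
    simp_rw [hpow]
    exact (hprod univ).2.trans (Finset.prod_congr rfl fun i _ => hgval i)
  -- value of μ
  have hμval : μ = ∑ i, (T i / 2 + W i) := by
    rw [hμ, integral_finset_sum univ (fun i _ => hXint i)]
    exact Finset.sum_congr rfl fun i _ => hXval i
  -- value of b
  have hbpt : ∀ ω, (∑ i, X i ω) * (-1 : ℝ) ^ (univ.filter (fun i => X i ω = 1/2)).card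
      = ∑ i, psiF (X i ω) * ∏ j ∈ univ.erase i, phiF (X j ω) := by
    intro ω
    rw [hpow ω, Finset.sum_mul]
    refine Finset.sum_congr rfl fun i _ => ?_
    rw [← Finset.mul_prod_erase univ (fun j => phiF (X j ω)) (mem_univ i), psiF_apply]
    ring
  have hterm : ∀ i : Fin n,
      Integrable (fun ω => psiF (X i ω) * ∏ j ∈ univ.erase i, phiF (X j ω)) ℙ ∧
      ∫ ω, psiF (X i ω) * ∏ j ∈ univ.erase i, phiF (X j ω) ∂ℙ
        = (W i - T i / 2) * ∏ j ∈ univ.erase i, (1 - 2 * T j) := by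
    intro i
    set F : Fin n → ℝ → ℝ := fun j => if j = i then psiF else phiF with hF
    have hFm : ∀ j, Measurable (F j) := by
      intro j; simp only [hF]; split_ifs; exacts [psiF_meas, phiF_meas]
    have hKind : iIndepFun (fun j (ω : Ω) => F j (X j ω)) ℙ :=
      hindep.comp F hFm
    have hKm : ∀ j, Measurable (fun ω => F j (X j ω)) := fun j => (hFm j).comp (hmeas j)
    have hdep0 : IndepFun (∏ j ∈ univ.erase i, fun ω => F j (X j ω))
        (fun ω => F i (X i ω)) ℙ :=
      hKind.indepFun_finsetProd_of_notMem hKm (Finset.notMem_erase i univ)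
    have e1 : (∏ j ∈ univ.erase i, fun ω => F j (X j ω))
        = (fun ω => ∏ j ∈ univ.erase i, phiF (X j ω)) := by
      funext ω
      rw [Finset.prod_apply]
      refine Finset.prod_congr rfl fun j hj => ?_
      simp only [hF, if_neg (Finset.ne_of_mem_erase hj)]
    have e2 : (fun ω => F i (X i ω)) = (fun ω => psiF (X i ω)) := by
      simp only [hF, if_pos rfl]
    rw [e1, e2] at hdep0
    have hdep : IndepFun (fun ω => psiF (X i ω))
        (fun ω => ∏ j ∈ univ.erase i, phiF (X j ω)) ℙ := hdep0.symm
    have hPi := hprod (univ.erase i)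
    constructor
    · exact hdep.integrable_mul (hψint i) hPi.1
    · have h := hdep.integral_fun_mul_eq_mul_integral (hψint i).aestronglyMeasurable hPi.1.aestronglyMeasurable
      calc ∫ ω, psiF (X i ω) * ∏ j ∈ univ.erase i, phiF (X j ω) ∂ℙ
          = (∫ ω, psiF (X i ω) ∂ℙ) * ∫ ω, ∏ j ∈ univ.erase i, phiF (X j ω) ∂ℙ := h
        _ = (W i - T i / 2) * ∏ j ∈ univ.erase i, (1 - 2 * T j) := by
            rw [hψval i, hPi.2]
            exact congrArg _ (Finset.prod_congr rfl fun j _ => hgval j)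
  have hbval : b = ∑ i, (W i - T i / 2) * ∏ j ∈ univ.erase i, (1 - 2 * T j) := by
    rw [hb]
    simp_rw [hbpt]
    rw [integral_finset_sum univ (fun i _ => (hterm i).1)]
    exact Finset.sum_congr rfl fun i _ => (hterm i).2
  -- algebra
  set A : Fin n → ℝ := fun i => 1 - 2 * T i with hA
  have hdiff : b - a * μ
      = ∑ i, ((W i - T i / 2) - (T i / 2 + W i) * A i) * ∏ j ∈ univ.erase i, A j := by
    rw [hbval, haval, hμval, Finset.mul_sum, ← Finset.sum_sub_distrib]
    refine Finset.sum_congr rfl fun i _ => ?_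
    rw [← Finset.mul_prod_erase univ A (mem_univ i)]
    simp only [hA]
    ring
  set t : Fin n → ℝ := fun i => |A i| with ht
  have ht0 : ∀ i, 0 ≤ t i := fun i => abs_nonneg _
  have ht1 : ∀ i, t i ≤ 1 := by
    intro i
    rw [ht]
    have h1 := hT0 i; have h2 := hW0 i; have h3 := hTW1 i
    rw [abs_le]; constructor <;> simp only [hA] <;> nlinarith
  have hd : ∀ i, |(W i - T i / 2) - (T i / 2 + W i) * A i| ≤ (1 - t i) / 2 :=
    fun i => dbound (T i) (W i) (hT0 i) (hW0 i) (hTW1 i)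
  calc |b - a * μ|
      = |∑ i, ((W i - T i / 2) - (T i / 2 + W i) * A i) * ∏ j ∈ univ.erase i, A j| := by
        rw [hdiff]
    _ ≤ ∑ i, |((W i - T i / 2) - (T i / 2 + W i) * A i) * ∏ j ∈ univ.erase i, A j| :=
        Finset.abs_sum_le_sum_abs _ _
    _ = ∑ i, |(W i - T i / 2) - (T i / 2 + W i) * A i| * ∏ j ∈ univ.erase i, t j := by
        refine Finset.sum_congr rfl fun i _ => ?_
        rw [abs_mul, Finset.abs_prod]
    _ ≤ ∑ i, (1 - t i) / 2 * ∏ j ∈ univ.erase i, t j := by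
        refine Finset.sum_le_sum fun i _ => ?_
        exact mul_le_mul_of_nonneg_right (hd i)
          (Finset.prod_nonneg fun j _ => ht0 j)
    _ = (∑ i, (1 - t i) * ∏ j ∈ univ.erase i, t j) / 2 := by
        rw [Finset.sum_div]
        exact Finset.sum_congr rfl fun i _ => by ring
    _ ≤ (1 - ∏ i, t i) / 2 := by
        have := sum_one_sub_mul_prod_le univ t (fun i _ => ht0 i) (fun i _ => ht1 i)
        linarith
    _ = (1 - |a|) / 2 := by rw [haval, Finset.abs_prod]
end

section
/- The two conditional means are within 1 of each other: |μ_even − μ_odd| ≤ 1. -/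
open MeasureTheory ProbabilityTheory Finset
open scoped Classical

noncomputable def ptcPhi : ℝ → ℝ := fun x => Real.cos (Real.pi * (2 * x))

lemma ptcPhi_add {x : ℝ} (y : ℝ) (hx : ∃ k : ℤ, x = k / 2) :
    ptcPhi (x + y) = ptcPhi x * ptcPhi y := by
  obtain ⟨k, rfl⟩ := hx
  have hsin : Real.sin (Real.pi * (2 * ((k : ℝ) / 2))) = 0 := by
    have h : Real.pi * (2 * ((k : ℝ) / 2)) = (k : ℝ) * Real.pi := by ring
    rw [h, Real.sin_int_mul_pi]
  have h2 : Real.pi * (2 * ((k : ℝ) / 2 + y))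
      = Real.pi * (2 * ((k : ℝ) / 2)) + Real.pi * (2 * y) := by ring
  unfold ptcPhi
  rw [h2, Real.cos_add, hsin, zero_mul, sub_zero]

lemma ptcPhi_zero : ptcPhi 0 = 1 := by simp [ptcPhi]

lemma ptcPhi_half : ptcPhi (1 / 2) = -1 := by
  have : Real.pi * (2 * ((1 : ℝ) / 2)) = Real.pi := by ring
  simp [ptcPhi, this]

lemma ptcPhi_one : ptcPhi 1 = 1 := by
  have h : ptcPhi ((1:ℝ)/2 + 1/2) = ptcPhi (1/2) * ptcPhi (1/2) :=
    ptcPhi_add _ ⟨1, by norm_num⟩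
  rw [ptcPhi_half] at h
  norm_num at h
  exact h

lemma ptcPhi_int (m : ℤ) : ptcPhi (m : ℝ) = 1 := by
  have : Real.pi * (2 * (m : ℝ)) = (m : ℝ) * (2 * Real.pi) := by ring
  rw [ptcPhi, this, Real.cos_int_mul_two_pi]

lemma ptcPhi_int_add_half (m : ℤ) : ptcPhi ((m : ℝ) + 1 / 2) = -1 := by
  have : Real.pi * (2 * ((m : ℝ) + 1 / 2)) = (m : ℝ) * (2 * Real.pi) + Real.pi := by ring
  rw [ptcPhi, this, Real.cos_int_mul_two_pi_add_pi]

lemma ptc_half_sum {ι : Type*} (s : Finset ι) (x : ι → ℝ)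
    (hx : ∀ i ∈ s, ∃ k : ℤ, x i = k / 2) : ∃ k : ℤ, ∑ i ∈ s, x i = k / 2 := by
  induction s using Finset.induction_on with
  | empty => exact ⟨0, by simp⟩
  | insert a s hns ih =>
    obtain ⟨k, hk⟩ := hx a (Finset.mem_insert_self a s)
    obtain ⟨l, hl⟩ := ih fun i hi => hx i (Finset.mem_insert_of_mem hi)
    exact ⟨k + l, by rw [Finset.sum_insert hns, hk, hl]; push_cast; ring⟩

lemma ptcPhi_sum {ι : Type*} (s : Finset ι) (x : ι → ℝ)
    (hx : ∀ i ∈ s, ∃ k : ℤ, x i = k / 2) :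
    ptcPhi (∑ i ∈ s, x i) = ∏ i ∈ s, ptcPhi (x i) := by
  induction s using Finset.induction_on with
  | empty => simpa using ptcPhi_zero
  | insert a s hns ih =>
    rw [Finset.sum_insert hns, Finset.prod_insert hns,
      ptcPhi_add _ (hx a (Finset.mem_insert_self a s)),
      ih fun i hi => hx i (Finset.mem_insert_of_mem hi)]

lemma ptc_sum_one_sub_le {ι : Type*} [DecidableEq ι] (s : Finset ι) (d : ι → ℝ)
    (h0 : ∀ i, 0 ≤ d i) (h1 : ∀ i, d i ≤ 1) :
    ∑ i ∈ s, (1 - d i) * ∏ j ∈ s.erase i, d j ≤ 1 - ∏ j ∈ s, d j := by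
  induction s using Finset.induction_on with
  | empty => simp
  | insert a s hns ih =>
    have hP0 : 0 ≤ ∏ j ∈ s, d j := Finset.prod_nonneg fun j _ => h0 j
    have hP1 : ∏ j ∈ s, d j ≤ 1 := Finset.prod_le_one (fun j _ => h0 j) (fun j _ => h1 j)
    rw [Finset.sum_insert hns, Finset.prod_insert hns, Finset.erase_insert hns]
    have hrw : ∑ i ∈ s, (1 - d i) * ∏ j ∈ (insert a s).erase i, d j
        = d a * ∑ i ∈ s, (1 - d i) * ∏ j ∈ s.erase i, d j := by
      rw [Finset.mul_sum]
      refine Finset.sum_congr rfl fun i hi => ?_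
      have hia : i ≠ a := fun h => hns (h ▸ hi)
      rw [Finset.erase_insert_of_ne (Ne.symm hia), Finset.prod_insert (fun h => hns (Finset.mem_of_mem_erase h))]
      ring
    rw [hrw]
    have h2 : d a * ∑ i ∈ s, (1 - d i) * ∏ j ∈ s.erase i, d j
        ≤ d a * (1 - ∏ j ∈ s, d j) := by
      exact mul_le_mul_of_nonneg_left ih (h0 a)
    nlinarith [h0 a, h1 a]


section MeasAux
variable {Ω : Type*} [MeasureSpace Ω] [IsProbabilityMeasure (ℙ : Measure Ω)]

lemma ptc_union_one (Y : Ω → ℝ) (hY : Measurable Y) {t w : ℝ}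
    (hT : (ℙ {ω | Y ω = 1/2}).toReal = t)
    (hW : (ℙ {ω | Y ω = 1}).toReal = w)
    (hL : (ℙ {ω | Y ω = 0}).toReal = 1 - t - w) :
    ℙ ({ω | Y ω = 0} ∪ ({ω | Y ω = 1/2} ∪ {ω | Y ω = 1})) = 1 := by
  have mA : MeasurableSet {ω | Y ω = 0} := hY (measurableSet_singleton 0)
  have mB : MeasurableSet {ω | Y ω = 1/2} := hY (measurableSet_singleton (1/2))
  have mC : MeasurableSet {ω | Y ω = 1} := hY (measurableSet_singleton 1)
  have dBC : Disjoint {ω | Y ω = 1/2} {ω | Y ω = 1} := by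
    rw [Set.disjoint_left]; rintro ω h1 h2
    simp only [Set.mem_setOf_eq] at h1 h2; rw [h1] at h2; norm_num at h2
  have dABC : Disjoint {ω | Y ω = 0} ({ω | Y ω = 1/2} ∪ {ω | Y ω = 1}) := by
    rw [Set.disjoint_left]; rintro ω h1 h2
    simp only [Set.mem_setOf_eq, Set.mem_union] at h1 h2
    rcases h2 with h2 | h2 <;> rw [h1] at h2 <;> norm_num at h2
  rw [← ENNReal.toReal_eq_one_iff,
    measure_union dABC (mB.union mC), measure_union dBC mC,
    ENNReal.toReal_add (measure_ne_top _ _) (by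
      exact ENNReal.add_ne_top.mpr ⟨measure_ne_top _ _, measure_ne_top _ _⟩),
    ENNReal.toReal_add (measure_ne_top _ _) (measure_ne_top _ _), hT, hW, hL]
  ring


lemma ptc_ae_mem (Y : Ω → ℝ) (hY : Measurable Y) {t w : ℝ}
    (hT : (ℙ {ω | Y ω = 1/2}).toReal = t)
    (hW : (ℙ {ω | Y ω = 1}).toReal = w)
    (hL : (ℙ {ω | Y ω = 0}).toReal = 1 - t - w) :
    ∀ᵐ ω ∂(ℙ : Measure Ω), Y ω = 0 ∨ Y ω = 1/2 ∨ Y ω = 1 := by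
  have mA : MeasurableSet {ω | Y ω = 0} := hY (measurableSet_singleton 0)
  have mB : MeasurableSet {ω | Y ω = 1/2} := hY (measurableSet_singleton (1/2))
  have mC : MeasurableSet {ω | Y ω = 1} := hY (measurableSet_singleton 1)
  have h1 := ptc_union_one Y hY hT hW hL
  have h0 := (prob_compl_eq_zero_iff (mA.union (mB.union mC))).mpr h1
  filter_upwards [measure_eq_zero_iff_ae_notMem.mp h0] with ω hω
  have hmem := Set.not_notMem.mp hω
  simpa [Set.mem_union, Set.mem_setOf_eq] using hmem

lemma ptc_integrable_comp (Y : Ω → ℝ) (hY : Measurable Y) {t w : ℝ}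
    (hT : (ℙ {ω | Y ω = 1/2}).toReal = t)
    (hW : (ℙ {ω | Y ω = 1}).toReal = w)
    (hL : (ℙ {ω | Y ω = 0}).toReal = 1 - t - w)
    (g : ℝ → ℝ) (hg : Measurable g) :
    Integrable (fun ω => g (Y ω)) ℙ := by
  refine Integrable.mono' (integrable_const (|g 0| + |g (1/2)| + |g 1|))
    (hg.comp hY).aestronglyMeasurable ?_
  filter_upwards [ptc_ae_mem Y hY hT hW hL] with ω hω
  rcases hω with h | h | h <;> rw [h] <;>
    simp only [Real.norm_eq_abs] <;> nlinarith [abs_nonneg (g 0), abs_nonneg (g (1/2)), abs_nonneg (g 1)]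

lemma ptc_integral_comp (Y : Ω → ℝ) (hY : Measurable Y) {t w : ℝ}
    (hT : (ℙ {ω | Y ω = 1/2}).toReal = t)
    (hW : (ℙ {ω | Y ω = 1}).toReal = w)
    (hL : (ℙ {ω | Y ω = 0}).toReal = 1 - t - w)
    (g : ℝ → ℝ) (hg : Measurable g) :
    ∫ ω, g (Y ω) = (1 - t - w) * g 0 + t * g (1/2) + w * g 1 := by
  have mA : MeasurableSet {ω | Y ω = 0} := hY (measurableSet_singleton 0)
  have mB : MeasurableSet {ω | Y ω = 1/2} := hY (measurableSet_singleton (1/2))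
  have mC : MeasurableSet {ω | Y ω = 1} := hY (measurableSet_singleton 1)
  have dBC : Disjoint {ω | Y ω = 1/2} {ω | Y ω = 1} := by
    rw [Set.disjoint_left]; rintro ω h1 h2
    simp only [Set.mem_setOf_eq] at h1 h2; rw [h1] at h2; norm_num at h2
  have dABC : Disjoint {ω | Y ω = 0} ({ω | Y ω = 1/2} ∪ {ω | Y ω = 1}) := by
    rw [Set.disjoint_left]; rintro ω h1 h2
    simp only [Set.mem_setOf_eq, Set.mem_union] at h1 h2
    rcases h2 with h2 | h2 <;> rw [h1] at h2 <;> norm_num at h2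
  have hint : Integrable (fun ω => g (Y ω)) ℙ := ptc_integrable_comp Y hY hT hW hL g hg
  have h1 := ptc_union_one Y hY hT hW hL
  have hcompl : ℙ ({ω | Y ω = 0} ∪ ({ω | Y ω = 1/2} ∪ {ω | Y ω = 1}))ᶜ = 0 :=
    (prob_compl_eq_zero_iff (mA.union (mB.union mC))).mpr h1
  have hsplit := integral_add_compl (mA.union (mB.union mC)) hint
  have hzero : ∫ ω in ({ω | Y ω = 0} ∪ ({ω | Y ω = 1/2} ∪ {ω | Y ω = 1}))ᶜ, g (Y ω) ∂ℙ = 0 := by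
    rw [Measure.restrict_eq_zero.mpr hcompl, integral_zero_measure]
  have hA : ∫ ω in {ω | Y ω = 0}, g (Y ω) ∂ℙ = (1 - t - w) * g 0 := by
    rw [setIntegral_congr_fun mA (g := fun _ => g 0) (fun ω hω => by
      simp only [Set.mem_setOf_eq] at hω; rw [hω]),
      setIntegral_const, measureReal_def, hL, smul_eq_mul]
  have hB : ∫ ω in {ω | Y ω = 1/2}, g (Y ω) ∂ℙ = t * g (1/2) := by
    rw [setIntegral_congr_fun mB (g := fun _ => g (1/2)) (fun ω hω => by
      simp only [Set.mem_setOf_eq] at hω; rw [hω]),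
      setIntegral_const, measureReal_def, hT, smul_eq_mul]
  have hC : ∫ ω in {ω | Y ω = 1}, g (Y ω) ∂ℙ = w * g 1 := by
    rw [setIntegral_congr_fun mC (g := fun _ => g 1) (fun ω hω => by
      simp only [Set.mem_setOf_eq] at hω; rw [hω]),
      setIntegral_const, measureReal_def, hW, smul_eq_mul]
  rw [← hsplit, hzero, add_zero,
    setIntegral_union dABC (mB.union mC) hint.integrableOn hint.integrableOn,
    setIntegral_union dBC mC hint.integrableOn hint.integrableOn, hA, hB, hC]
  ring

lemma ptc_integral_prod {n : ℕ} (Y : Fin n → Ω → ℝ) (hmeas : ∀ i, Measurable (Y i))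
    (hindep : iIndepFun Y ℙ)
    (hint : ∀ i, Integrable (Y i) ℙ) (s : Finset (Fin n)) :
    Integrable (fun ω => ∏ i ∈ s, Y i ω) ℙ ∧
      (∫ ω, ∏ i ∈ s, Y i ω) = ∏ i ∈ s, ∫ ω, Y i ω := by
  induction s using Finset.induction_on with
  | empty => simpa using integrable_const (1 : ℝ)
  | insert a s hns ih =>
    have hidf : IndepFun (∏ j ∈ s, Y j) (Y a) ℙ :=
      hindep.indepFun_finsetProd_of_notMem hmeas hns
    have hps : (∏ j ∈ s, Y j) = fun ω => ∏ j ∈ s, Y j ω := by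
      funext ω; exact Finset.prod_apply ω s Y
    rw [hps] at hidf
    have hint2 : Integrable (fun ω => (∏ j ∈ s, Y j ω) * Y a ω) ℙ :=
      hidf.integrable_mul ih.1 (hint a)
    have hie : ∫ ω, (∏ j ∈ s, Y j ω) * Y a ω
        = (∫ ω, ∏ j ∈ s, Y j ω) * ∫ ω, Y a ω :=
      hidf.integral_mul_eq_mul_integral ih.1.aestronglyMeasurable (hint a).aestronglyMeasurable
    constructor
    · refine hint2.congr (Filter.Eventually.of_forall fun ω => ?_)
      simp only [Finset.prod_insert hns]; ring
    · rw [Finset.prod_insert hns]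
      have : (fun ω => ∏ i ∈ insert a s, Y i ω)
          = fun ω => (∏ j ∈ s, Y j ω) * Y a ω := by
        funext ω; rw [Finset.prod_insert hns]; ring
      rw [this, hie, ih.2]; ring

end MeasAux

lemma ptc_not_both (m m' : ℤ) : ((m : ℝ) ≠ (m' : ℝ) + 1/2) := by
  intro h
  have h2 : ((2 * m : ℤ) : ℝ) = ((2 * m' + 1 : ℤ) : ℝ) := by push_cast; linarith
  have := Int.cast_injective (α := ℝ) h2
  omega

lemma ptc_dichot {x : ℝ} (h : ∃ k : ℤ, x = k / 2) :
    (∃ m : ℤ, x = (m : ℝ)) ∨ (∃ m : ℤ, x = (m : ℝ) + 1/2) := by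
  obtain ⟨k, rfl⟩ := h
  rcases Int.even_or_odd k with ⟨m, hm⟩ | ⟨m, hm⟩
  · exact Or.inl ⟨m, by rw [hm]; push_cast; ring⟩
  · exact Or.inr ⟨m, by rw [hm]; push_cast; ring⟩

set_option maxHeartbeats 1000000 in
/-- `|μ_even - μ_odd| ≤ 1`. -/
theorem poisson_trinomial_conditional_means_close
    {Ω : Type*} [MeasureSpace Ω] [IsProbabilityMeasure (ℙ : Measure Ω)]
    {n : ℕ} (X : Fin n → Ω → ℝ) (T W : Fin n → ℝ)
    (hmeas : ∀ i, Measurable (X i))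
    (hindep : iIndepFun X ℙ)
    (hT0 : ∀ i, 0 ≤ T i) (hW0 : ∀ i, 0 ≤ W i) (hTW1 : ∀ i, T i + W i ≤ 1)
    (hT : ∀ i, (ℙ {ω | X i ω = 1/2}).toReal = T i)
    (hW : ∀ i, (ℙ {ω | X i ω = 1}).toReal = W i)
    (hL : ∀ i, (ℙ {ω | X i ω = 0}).toReal = 1 - T i - W i)
    (hposZ : 0 < (ℙ {ω | ∃ m : ℤ, (∑ i, X i ω) = (m : ℝ)}).toReal)
    (hposH : 0 < (ℙ {ω | ∃ m : ℤ, (∑ i, X i ω) = (m : ℝ) + 1/2}).toReal)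
    (μeven μodd : ℝ)
    (hμeven : μeven = (∫ ω in {ω | ∃ m : ℤ, (∑ i, X i ω) = (m : ℝ)}, ∑ i, X i ω ∂ℙ)
        / (ℙ {ω | ∃ m : ℤ, (∑ i, X i ω) = (m : ℝ)}).toReal)
    (hμodd : μodd = (∫ ω in {ω | ∃ m : ℤ, (∑ i, X i ω) = (m : ℝ) + 1/2}, ∑ i, X i ω ∂ℙ)
        / (ℙ {ω | ∃ m : ℤ, (∑ i, X i ω) = (m : ℝ) + 1/2}).toReal) :
    |μeven - μodd| ≤ 1 := by
  have hφm : Measurable ptcPhi := by unfold ptcPhi; fun_prop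
  have hxφm : Measurable (fun x : ℝ => x * ptcPhi x) := measurable_id.mul hφm
  -- abbreviations
  set c : Fin n → ℝ := fun i => 1 - 2 * T i with hcdef
  set a : ℝ := ∏ i, c i with hadef
  set M : ℝ := ∑ i, (T i / 2 + W i) with hMdef
  set Cx : ℝ := ∑ i, (W i - T i / 2) * ∏ j ∈ Finset.univ.erase i, c j with hCxdef
  -- measurability of the sets
  have hSm : Measurable (fun ω => ∑ i, X i ω) :=
    Finset.measurable_sum Finset.univ fun i _ => hmeas i
  have mEe : MeasurableSet {ω : Ω | ∃ m : ℤ, (∑ i, X i ω) = (m : ℝ)} := by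
    have : {ω : Ω | ∃ m : ℤ, (∑ i, X i ω) = (m : ℝ)}
        = (fun ω => ∑ i, X i ω) ⁻¹' (Set.range ((↑) : ℤ → ℝ)) := by
      ext ω; simp [Set.mem_preimage, Set.mem_range, eq_comm]
    rw [this]
    exact hSm ((Set.countable_range _).measurableSet)
  have mEo : MeasurableSet {ω : Ω | ∃ m : ℤ, (∑ i, X i ω) = (m : ℝ) + 1/2} := by
    have : {ω : Ω | ∃ m : ℤ, (∑ i, X i ω) = (m : ℝ) + 1/2}
        = (fun ω => ∑ i, X i ω) ⁻¹' (Set.range (fun m : ℤ => (m : ℝ) + 1/2)) := by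
      ext ω; simp [Set.mem_preimage, Set.mem_range, eq_comm]
    rw [this]
    exact hSm ((Set.countable_range _).measurableSet)
  -- single-variable integrals
  have hci : ∀ i, ∫ ω, ptcPhi (X i ω) = c i := by
    intro i
    rw [ptc_integral_comp (X i) (hmeas i) (hT i) (hW i) (hL i) ptcPhi hφm,
      ptcPhi_zero, ptcPhi_half, ptcPhi_one, hcdef]
    ring
  have hmi : ∀ i, ∫ ω, X i ω = T i / 2 + W i := by
    intro i
    have h := ptc_integral_comp (X i) (hmeas i) (hT i) (hW i) (hL i) id measurable_id
    simp only [id_eq] at h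
    rw [h]; ring
  have hei : ∀ i, ∫ ω, X i ω * ptcPhi (X i ω) = W i - T i / 2 := by
    intro i
    rw [ptc_integral_comp (X i) (hmeas i) (hT i) (hW i) (hL i) _ hxφm]
    rw [ptcPhi_half, ptcPhi_one]
    ring
  -- integrability of basic pieces
  have hXint : ∀ i, Integrable (X i) ℙ := fun i => by
    simpa using ptc_integrable_comp (X i) (hmeas i) (hT i) (hW i) (hL i) id measurable_id
  have hφXint : ∀ i, Integrable (fun ω => ptcPhi (X i ω)) ℙ := fun i =>
    ptc_integrable_comp (X i) (hmeas i) (hT i) (hW i) (hL i) ptcPhi hφm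
  -- the a.e. good set
  have hG : ∀ᵐ ω ∂(ℙ : Measure Ω), ∀ i, X i ω = 0 ∨ X i ω = 1/2 ∨ X i ω = 1 := by
    rw [MeasureTheory.ae_all_iff]
    exact fun i => ptc_ae_mem (X i) (hmeas i) (hT i) (hW i) (hL i)
  have hGhalf : ∀ (ω : Ω), (∀ i, X i ω = 0 ∨ X i ω = 1/2 ∨ X i ω = 1) →
      ∀ i : Fin n, ∃ k : ℤ, X i ω = k / 2 := by
    intro ω hω i
    rcases hω i with h | h | h
    · exact ⟨0, by rw [h]; norm_num⟩
    · exact ⟨1, by rw [h]; norm_num⟩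
    · exact ⟨2, by rw [h]; norm_num⟩
  -- the product family for ptcPhi
  have hPindep : iIndepFun (fun i ω => ptcPhi (X i ω)) ℙ := by
    exact hindep.comp (fun _ => ptcPhi) (fun _ => hφm)
  have hPprod := ptc_integral_prod (fun i ω => ptcPhi (X i ω))
    (fun i => hφm.comp (hmeas i)) hPindep hφXint Finset.univ
  -- ∫ φ(S) = a
  have hφSint : Integrable (fun ω => ptcPhi (∑ i, X i ω)) ℙ := by
    refine hPprod.1.congr ?_
    filter_upwards [hG] with ω hω
    exact (ptcPhi_sum Finset.univ _ (fun i _ => hGhalf ω hω i)).symm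
  have ha : ∫ ω, ptcPhi (∑ i, X i ω) = a := by
    rw [integral_congr_ae (g := fun ω => ∏ i, ptcPhi (X i ω)) ?_, hPprod.2, hadef]
    · exact Finset.prod_congr rfl fun i _ => hci i
    · filter_upwards [hG] with ω hω
      exact ptcPhi_sum Finset.univ _ (fun i _ => hGhalf ω hω i)
  -- ∫ S = M
  have hSint : Integrable (fun ω => ∑ i, X i ω) ℙ := integrable_finset_sum _ fun i _ => hXint i
  have hM : ∫ ω, ∑ i, X i ω = M := by
    rw [integral_finset_sum _ fun i _ => hXint i, hMdef]
    exact Finset.sum_congr rfl fun i _ => hmi i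
  -- the mixed families
  have hFam : ∀ i0 : Fin n,
      Integrable (fun ω => ∏ j, (if j = i0 then X j ω * ptcPhi (X j ω) else ptcPhi (X j ω))) ℙ ∧
      (∫ ω, ∏ j, (if j = i0 then X j ω * ptcPhi (X j ω) else ptcPhi (X j ω)))
        = (W i0 - T i0 / 2) * ∏ j ∈ Finset.univ.erase i0, c j := by
    intro i0
    have hg : ∀ j : Fin n, Measurable (fun x : ℝ => if j = i0 then x * ptcPhi x else ptcPhi x) := by
      intro j; by_cases h : j = i0 <;> simp [h, hxφm, hφm]
    have hind : iIndepFun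
        (fun j ω => if j = i0 then X j ω * ptcPhi (X j ω) else ptcPhi (X j ω)) ℙ := by
      exact hindep.comp (fun j => fun x : ℝ => if j = i0 then x * ptcPhi x else ptcPhi x) hg
    have hintj : ∀ j, Integrable (fun ω => if j = i0 then X j ω * ptcPhi (X j ω) else ptcPhi (X j ω)) ℙ := by
      intro j
      exact ptc_integrable_comp (X j) (hmeas j) (hT j) (hW j) (hL j) _ (hg j)
    have hmeasj : ∀ j, Measurable (fun ω => if j = i0 then X j ω * ptcPhi (X j ω) else ptcPhi (X j ω)) := by
      intro j
      exact (hg j).comp (hmeas j)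
    have hp := ptc_integral_prod _ hmeasj hind hintj Finset.univ
    refine ⟨hp.1, ?_⟩
    rw [hp.2]
    have hsplit : ∀ j : Fin n, (∫ ω, if j = i0 then X j ω * ptcPhi (X j ω) else ptcPhi (X j ω))
        = if j = i0 then W j - T j / 2 else c j := by
      intro j
      by_cases h : j = i0
      · simp only [h, if_true]
        exact hei i0
      · simp only [h, if_false]
        exact hci j
    rw [Finset.prod_congr rfl (fun j _ => hsplit j),
      ← Finset.mul_prod_erase Finset.univ _ (Finset.mem_univ i0), if_pos rfl]
    congr 1
    exact Finset.prod_congr rfl fun j hj => if_neg (Finset.ne_of_mem_erase hj)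
  -- ∫ S φ(S) = Cx
  have hSφae : ∀ᵐ ω ∂(ℙ : Measure Ω), (∑ i, X i ω) * ptcPhi (∑ i, X i ω)
      = ∑ i, ∏ j, (if j = i then X j ω * ptcPhi (X j ω) else ptcPhi (X j ω)) := by
    filter_upwards [hG] with ω hω
    rw [ptcPhi_sum Finset.univ _ (fun i _ => hGhalf ω hω i), Finset.sum_mul]
    refine Finset.sum_congr rfl fun i _ => ?_
    have e1 : ∏ j, (if j = i then X j ω * ptcPhi (X j ω) else ptcPhi (X j ω))
        = (X i ω * ptcPhi (X i ω)) * ∏ j ∈ Finset.univ.erase i, ptcPhi (X j ω) := by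
      rw [← Finset.mul_prod_erase Finset.univ _ (Finset.mem_univ i), if_pos rfl]
      congr 1
      exact Finset.prod_congr rfl fun j hj => if_neg (Finset.ne_of_mem_erase hj)
    have e2 : ∏ j, ptcPhi (X j ω)
        = ptcPhi (X i ω) * ∏ j ∈ Finset.univ.erase i, ptcPhi (X j ω) :=
      (Finset.mul_prod_erase Finset.univ _ (Finset.mem_univ i)).symm
    rw [e1, e2]
    ring
  have hSφint : Integrable (fun ω => (∑ i, X i ω) * ptcPhi (∑ i, X i ω)) ℙ := by
    refine (integrable_finset_sum Finset.univ (fun i _ => (hFam i).1)).congr ?_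
    filter_upwards [hSφae] with ω h
    exact h.symm
  have hCx : ∫ ω, (∑ i, X i ω) * ptcPhi (∑ i, X i ω) = Cx := by
    rw [integral_congr_ae hSφae, integral_finset_sum _ (fun i _ => (hFam i).1), hCxdef]
    exact Finset.sum_congr rfl fun i _ => (hFam i).2
  -- probabilities
  have hpe : (ℙ {ω : Ω | ∃ m : ℤ, (∑ i, X i ω) = (m : ℝ)}).toReal = (1 + a) / 2 := by
    rw [← measureReal_def, ← integral_indicator_one mEe]
    rw [integral_congr_ae (g := fun ω => (1 + ptcPhi (∑ i, X i ω)) / 2) ?_]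
    · rw [integral_div, integral_add (integrable_const 1) hφSint, ha, integral_const]
      simp
    · filter_upwards [hG] with ω hω
      have hhalf := ptc_half_sum Finset.univ (fun i => X i ω) (fun i _ => hGhalf ω hω i)
      rcases ptc_dichot hhalf with ⟨m, hm⟩ | ⟨m, hm⟩
      · have hmem : ω ∈ {ω : Ω | ∃ m : ℤ, (∑ i, X i ω) = (m : ℝ)} := ⟨m, hm⟩
        rw [Set.indicator_of_mem hmem, hm, ptcPhi_int]
        norm_num
      · have hmem : ω ∉ {ω : Ω | ∃ m : ℤ, (∑ i, X i ω) = (m : ℝ)} := by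
          rintro ⟨m', hm'⟩
          exact ptc_not_both m' m (by rw [← hm, hm'])
        rw [Set.indicator_of_notMem hmem, hm, ptcPhi_int_add_half]
        norm_num
  have hpo : (ℙ {ω : Ω | ∃ m : ℤ, (∑ i, X i ω) = (m : ℝ) + 1/2}).toReal = (1 - a) / 2 := by
    rw [← measureReal_def, ← integral_indicator_one mEo]
    rw [integral_congr_ae (g := fun ω => (1 - ptcPhi (∑ i, X i ω)) / 2) ?_]
    · rw [integral_div, integral_sub (integrable_const 1) hφSint, ha, integral_const]
      simp
    · filter_upwards [hG] with ω hω
      have hhalf := ptc_half_sum Finset.univ (fun i => X i ω) (fun i _ => hGhalf ω hω i)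
      rcases ptc_dichot hhalf with ⟨m, hm⟩ | ⟨m, hm⟩
      · have hmem : ω ∉ {ω : Ω | ∃ m : ℤ, (∑ i, X i ω) = (m : ℝ) + 1/2} := by
          rintro ⟨m', hm'⟩
          exact ptc_not_both m m' (by rw [← hm, hm'])
        rw [Set.indicator_of_notMem hmem, hm, ptcPhi_int]
        norm_num
      · have hmem : ω ∈ {ω : Ω | ∃ m : ℤ, (∑ i, X i ω) = (m : ℝ) + 1/2} := ⟨m, hm⟩
        rw [Set.indicator_of_mem hmem, hm, ptcPhi_int_add_half]
        norm_num
  -- set integrals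
  have hIe : ∫ ω in {ω : Ω | ∃ m : ℤ, (∑ i, X i ω) = (m : ℝ)}, ∑ i, X i ω ∂ℙ
      = (M + Cx) / 2 := by
    rw [← integral_indicator mEe]
    rw [integral_congr_ae
      (g := fun ω => ((∑ i, X i ω) + (∑ i, X i ω) * ptcPhi (∑ i, X i ω)) / 2) ?_]
    · rw [integral_div, integral_add hSint hSφint, hM, hCx]
    · filter_upwards [hG] with ω hω
      have hhalf := ptc_half_sum Finset.univ (fun i => X i ω) (fun i _ => hGhalf ω hω i)
      rcases ptc_dichot hhalf with ⟨m, hm⟩ | ⟨m, hm⟩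
      · have hmem : ω ∈ {ω : Ω | ∃ m : ℤ, (∑ i, X i ω) = (m : ℝ)} := ⟨m, hm⟩
        rw [Set.indicator_of_mem hmem, hm, ptcPhi_int]
        ring
      · have hmem : ω ∉ {ω : Ω | ∃ m : ℤ, (∑ i, X i ω) = (m : ℝ)} := by
          rintro ⟨m', hm'⟩
          exact ptc_not_both m' m (by rw [← hm, hm'])
        rw [Set.indicator_of_notMem hmem, hm, ptcPhi_int_add_half]
        ring
  have hIo : ∫ ω in {ω : Ω | ∃ m : ℤ, (∑ i, X i ω) = (m : ℝ) + 1/2}, ∑ i, X i ω ∂ℙ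
      = (M - Cx) / 2 := by
    rw [← integral_indicator mEo]
    rw [integral_congr_ae
      (g := fun ω => ((∑ i, X i ω) - (∑ i, X i ω) * ptcPhi (∑ i, X i ω)) / 2) ?_]
    · rw [integral_div, integral_sub hSint hSφint, hM, hCx]
    · filter_upwards [hG] with ω hω
      have hhalf := ptc_half_sum Finset.univ (fun i => X i ω) (fun i _ => hGhalf ω hω i)
      rcases ptc_dichot hhalf with ⟨m, hm⟩ | ⟨m, hm⟩
      · have hmem : ω ∉ {ω : Ω | ∃ m : ℤ, (∑ i, X i ω) = (m : ℝ) + 1/2} := by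
          rintro ⟨m', hm'⟩
          exact ptc_not_both m m' (by rw [← hm, hm'])
        rw [Set.indicator_of_notMem hmem, hm, ptcPhi_int]
        ring
      · have hmem : ω ∈ {ω : Ω | ∃ m : ℤ, (∑ i, X i ω) = (m : ℝ) + 1/2} := ⟨m, hm⟩
        rw [Set.indicator_of_mem hmem, hm, ptcPhi_int_add_half]
        ring
  -- positivity of denominators
  have ha1 : 0 < 1 + a := by rw [hpe] at hposZ; linarith
  have ha2 : 0 < 1 - a := by rw [hpo] at hposH; linarith
  -- the key finite inequality
  set d : Fin n → ℝ := fun i => |c i| with hddef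
  have hd0 : ∀ i, 0 ≤ d i := fun i => abs_nonneg _
  have hT1 : ∀ i, T i ≤ 1 := fun i => by have h1 := hTW1 i; have h2 := hW0 i; linarith
  have hd1 : ∀ i, d i ≤ 1 := by
    intro i
    rw [hddef]
    simp only [hcdef]
    rw [abs_le]
    constructor
    · linarith [hT1 i]
    · linarith [hT0 i]
  have hD : Cx - a * M = ∑ i, (-(T i * (1 - T i - 2 * W i))) * ∏ j ∈ Finset.univ.erase i, c j := by
    rw [hCxdef, hMdef, Finset.mul_sum, ← Finset.sum_sub_distrib]
    refine Finset.sum_congr rfl fun i _ => ?_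
    rw [hadef, ← Finset.mul_prod_erase Finset.univ c (Finset.mem_univ i)]
    simp only [hcdef]
    ring
  have habs : |Cx - a * M| ≤ ∑ i, (T i * (1 - T i)) * ∏ j ∈ Finset.univ.erase i, d j := by
    rw [hD]
    refine (Finset.abs_sum_le_sum_abs _ _).trans ?_
    refine Finset.sum_le_sum fun i _ => ?_
    rw [abs_mul, Finset.abs_prod]
    have h1 : |(-(T i * (1 - T i - 2 * W i)))| ≤ T i * (1 - T i) := by
      rw [abs_neg, abs_mul, abs_of_nonneg (hT0 i)]
      refine mul_le_mul_of_nonneg_left ?_ (hT0 i)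
      rw [abs_le]
      constructor
      · have := hTW1 i; linarith
      · have := hW0 i; linarith
    exact mul_le_mul_of_nonneg_right h1 (Finset.prod_nonneg fun j _ => abs_nonneg _)
  have hsum2 : ∑ i, (T i * (1 - T i)) * ∏ j ∈ Finset.univ.erase i, d j
      ≤ (1/2) * (1 - ∏ j, d j) := by
    have hstep : ∀ i, (T i * (1 - T i)) * ∏ j ∈ Finset.univ.erase i, d j
        ≤ ((1/2) * (1 - d i)) * ∏ j ∈ Finset.univ.erase i, d j := by
      intro i
      refine mul_le_mul_of_nonneg_right ?_ (Finset.prod_nonneg fun j _ => hd0 j)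
      have hsq : d i ^ 2 = (1 - 2 * T i) ^ 2 := by
        rw [hddef]; simp only; rw [sq_abs, hcdef]
      nlinarith [hd0 i, hd1 i, sq_nonneg (1 - d i)]
    refine (Finset.sum_le_sum fun i _ => hstep i).trans ?_
    have := ptc_sum_one_sub_le Finset.univ d hd0 hd1
    calc ∑ i, ((1/2) * (1 - d i)) * ∏ j ∈ Finset.univ.erase i, d j
        = (1/2) * ∑ i, (1 - d i) * ∏ j ∈ Finset.univ.erase i, d j := by
          rw [Finset.mul_sum]; exact Finset.sum_congr rfl fun i _ => by ring
      _ ≤ (1/2) * (1 - ∏ j, d j) := by linarith [this]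
  have hprodd0 : 0 ≤ ∏ j, d j := Finset.prod_nonneg fun j _ => hd0 j
  have hprodd1 : ∏ j, d j ≤ 1 := Finset.prod_le_one (fun j _ => hd0 j) (fun j _ => hd1 j)
  have habsa : |a| = ∏ j, d j := by
    rw [hadef, Finset.abs_prod]
  have hasq : a ^ 2 ≤ ∏ j, d j := by
    calc a ^ 2 = |a| ^ 2 := (sq_abs a).symm
      _ = (∏ j, d j) ^ 2 := by rw [habsa]
      _ ≤ ∏ j, d j := by nlinarith [hprodd0, hprodd1]
  have hkey : |2 * (Cx - a * M)| ≤ (1 + a) * (1 - a) := by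
    have h2 : (1 + a) * (1 - a) = 1 - a ^ 2 := by ring
    rw [abs_mul, abs_two, h2]
    linarith [habs, hsum2, hasq]
  -- final computation
  rw [hμeven, hμodd, hIe, hIo, hpe, hpo]
  have heq : (M + Cx) / 2 / ((1 + a) / 2) - (M - Cx) / 2 / ((1 - a) / 2)
      = 2 * (Cx - a * M) / ((1 + a) * (1 - a)) := by
    field_simp
    ring
  rw [heq, abs_div, abs_of_pos (by positivity : (0:ℝ) < (1 + a) * (1 - a))]
  rw [div_le_one (by positivity)]
  exact hkey
end

section
/- (Hermite–Biehler) Let f be a Hurwitz stable real polynomial with f(0) ≠ 0, and write f(w) = g(w²) + w·h(w²) for real polynomials g and h (the even and odd parts of f). Then all complex zeros of g and all complex zeros of h are real and non-positive. -/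
open Polynomial Complex

lemma hb_factor_lt (w r : ℂ) (hw : 0 < w.re) (hr : r.re < 0) :
    ‖(starRingEnd ℂ) w + r‖ < ‖w - r‖ := by
  rw [Complex.norm_def, Complex.norm_def]
  apply Real.sqrt_lt_sqrt (Complex.normSq_nonneg _)
  simp only [Complex.normSq_apply, Complex.add_re, Complex.add_im, Complex.sub_re,
    Complex.sub_im, Complex.conj_re, Complex.conj_im]
  nlinarith [sq_nonneg (w.im + r.im), sq_nonneg (w.im - r.im)]

lemma hb_prod_lt (F G : ℂ → ℝ) : ∀ (s : Multiset ℂ), s ≠ 0 →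
    (∀ r ∈ s, 0 ≤ F r) → (∀ r ∈ s, F r < G r) →
    (s.map F).prod < (s.map G).prod := by
  intro s
  induction s using Multiset.induction with
  | empty => intro hs; exact absurd rfl hs
  | cons r t ih =>
    intro _ h0 hlt
    rcases eq_or_ne t 0 with rfl | ht
    · simpa using hlt r (by simp)
    · simp only [Multiset.map_cons, Multiset.prod_cons]
      have h1 : F r < G r := hlt r (by simp)
      have h2 : (t.map F).prod < (t.map G).prod :=
        ih ht (fun x hx => h0 x (by simp [hx])) (fun x hx => hlt x (by simp [hx]))
      have h3 : 0 ≤ F r := h0 r (by simp)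
      have h4 : 0 ≤ (t.map F).prod :=
        Multiset.prod_nonneg (by
          intro x hx
          obtain ⟨y, hy, rfl⟩ := Multiset.mem_map.1 hx
          exact h0 y (by simp [hy]))
      exact mul_lt_mul'' h1 h2 h3 h4

lemma hb_eval_prod (w : ℂ) (s : Multiset ℂ) :
    ‖eval w (Multiset.map (fun a => X - C a) s).prod‖ =
    (Multiset.map (fun r => ‖w - r‖) s).prod := by
  rw [eval_multiset_prod, Multiset.map_map, ← normHom_apply, map_multiset_prod, Multiset.map_map]
  simp [Function.comp_def]

/-- Key inequality: for a Hurwitz stable real `f` with at least one complex root,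
`|f(-w)| < |f(w)|` whenever `Re w > 0`. -/
lemma hb_key (f : ℝ[X])
    (hroots : ∀ z ∈ (f.map (algebraMap ℝ ℂ)).roots, z.re < 0)
    (hne : (f.map (algebraMap ℝ ℂ)).roots ≠ 0)
    (w : ℂ) (hw : 0 < w.re) :
    ‖(f.map (algebraMap ℝ ℂ)).eval (-w)‖ <
      ‖(f.map (algebraMap ℝ ℂ)).eval w‖ := by
  set F := f.map (algebraMap ℝ ℂ) with hF
  have hF0 : F ≠ 0 := fun h => hne (by rw [h]; simp)
  have hfact := (C_leadingCoeff_mul_prod_multiset_X_sub_C (IsAlgClosed.card_roots_eq_natDegree (p := F))).symm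
  have hconj : F.eval (-w) = (starRingEnd ℂ) (F.eval (-(starRingEnd ℂ) w)) := by
    simp only [hF, eval_map, ← aeval_def, ← aeval_conj, map_neg]
    simp
  have habs : ‖F.eval (-w)‖ = ‖F.eval (-(starRingEnd ℂ) w)‖ := by
    rw [hconj, Complex.norm_conj]
  rw [habs]
  have hevalw : ‖F.eval w‖ =
      ‖F.leadingCoeff‖ * (F.roots.map (fun r => ‖w - r‖)).prod := by
    conv_lhs => rw [hfact]
    rw [eval_mul, eval_C, norm_mul, hb_eval_prod]
  have hevalw' : ‖F.eval (-(starRingEnd ℂ) w)‖ =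
      ‖F.leadingCoeff‖ *
        (F.roots.map (fun r => ‖(starRingEnd ℂ) w + r‖)).prod := by
    conv_lhs => rw [hfact]
    rw [eval_mul, eval_C, norm_mul, hb_eval_prod]
    refine congrArg _ (congrArg Multiset.prod (Multiset.map_congr rfl ?_))
    intro r _
    rw [show -(starRingEnd ℂ) w - r = -((starRingEnd ℂ) w + r) by ring, norm_neg]
  rw [hevalw, hevalw']
  have hlc : 0 < ‖F.leadingCoeff‖ := by
    simpa using leadingCoeff_ne_zero.2 hF0
  apply mul_lt_mul_of_pos_left _ hlc
  exact hb_prod_lt _ _ F.roots hne (fun r _ => norm_nonneg _)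
    (fun r hr => hb_factor_lt w r hw (hroots r hr))

/-- Hermite–Biehler: if `f` is a Hurwitz stable real polynomial with
`f(0) ≠ 0` and `f(w) = g(w²) + w·h(w²)`, then all complex zeros of `g` and of `h`
are real and non-positive. -/
theorem hermite_biehler (f g h : Polynomial ℝ)
    (hstable : ∀ z ∈ (f.map (algebraMap ℝ ℂ)).roots, z.re < 0)
    (hf0 : f.eval 0 ≠ 0)
    (hdec : f = g.comp (X ^ 2) + X * h.comp (X ^ 2)) :
    (∀ z ∈ (g.map (algebraMap ℝ ℂ)).roots, z.im = 0 ∧ z.re ≤ 0) ∧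
    (∀ z ∈ (h.map (algebraMap ℝ ℂ)).roots, z.im = 0 ∧ z.re ≤ 0) := by
  set F := f.map (algebraMap ℝ ℂ) with hFdef
  set G := g.map (algebraMap ℝ ℂ) with hGdef
  set H := h.map (algebraMap ℝ ℂ) with hHdef
  have hfne : f ≠ 0 := fun hc => hf0 (by rw [hc]; simp)
  have hFne : F ≠ 0 := by
    rw [hFdef, Polynomial.map_ne_zero_iff (algebraMap ℝ ℂ).injective]
    exact hfne
  -- the fundamental evaluation identity
  have heval : ∀ u : ℂ, F.eval u = G.eval (u ^ 2) + u * H.eval (u ^ 2) := by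
    intro u
    simp only [hFdef, hGdef, hHdef, eval_map, ← aeval_def]
    conv_lhs => rw [hdec]
    simp [aeval_comp]
  -- obtaining a square root with positive real part
  have hsqrt : ∀ z : ℂ, ¬(z.im = 0 ∧ z.re ≤ 0) → ∃ w : ℂ, w ^ 2 = z ∧ 0 < w.re := by
    intro z hz
    obtain ⟨w, hw⟩ := IsAlgClosed.exists_pow_nat_eq z (n := 2) (by norm_num)
    have hwre : w.re ≠ 0 := by
      intro h0
      apply hz
      constructor
      · rw [← hw]; simp [pow_two, Complex.mul_im, h0]
      · rw [← hw]
        simp only [pow_two, Complex.mul_re, h0]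
        nlinarith [sq_nonneg w.im]
    rcases lt_or_gt_of_ne hwre with hlt | hgt
    · exact ⟨-w, by rw [neg_pow]; simpa using hw, by simpa using hlt⟩
    · exact ⟨w, hw, hgt⟩
  -- if F(w) = 0 for some w with Re w > 0, contradiction with stability
  have hnoroot : ∀ w : ℂ, 0 < w.re → F.eval w ≠ 0 := by
    intro w hw hc
    have : w ∈ F.roots := by
      rw [mem_roots hFne]
      exact hc
    exact absurd (hstable w this) (by linarith)
  -- the main argument for the `g` part
  constructor
  · intro z hz
    by_contra hcon
    obtain ⟨w, hw2, hwre⟩ := hsqrt z hcon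
    have hGz : G.eval z = 0 := by
      exact (mem_roots (by
        intro hc
        rw [hc] at hz
        simp at hz)).1 hz
    have hFw : F.eval w = w * H.eval z := by rw [heval, hw2, hGz, zero_add]
    have hFmw : F.eval (-w) = -(w * H.eval z) := by
      have hsq : (-w) ^ 2 = z := by rw [neg_pow]; simpa using hw2
      rw [heval, hsq, hGz]
      ring
    rcases eq_or_ne (H.eval z) 0 with hH0 | hH0
    · exact hnoroot w hwre (by rw [hFw, hH0, mul_zero])
    · -- |F(w)| = |F(-w)|, contradicting strict inequality / constancy
      have habs_eq : ‖F.eval (-w)‖ = ‖F.eval w‖ := by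
        rw [hFw, hFmw, norm_neg]
      rcases eq_or_ne F.roots 0 with hr0 | hr0
      · -- F is a nonzero constant; but F(w) = -F(-w) forces F(w) = 0
        have hfact := (C_leadingCoeff_mul_prod_multiset_X_sub_C (IsAlgClosed.card_roots_eq_natDegree (p := F))).symm
        rw [hr0] at hfact
        simp only [Multiset.map_zero, Multiset.prod_zero, mul_one] at hfact
        have h1 : F.eval w = F.leadingCoeff := by conv_lhs => rw [hfact, eval_C]
        have h2 : F.eval (-w) = F.leadingCoeff := by conv_lhs => rw [hfact, eval_C]
        have : w * H.eval z = 0 := by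
          have := h1.trans h2.symm
          rw [hFw, hFmw] at this
          linear_combination this / 2
        rcases mul_eq_zero.1 this with hc | hc
        · rw [hc] at hwre; simp at hwre
        · exact hH0 hc
      · exact absurd (hb_key f hstable hr0 w hwre) (by rw [habs_eq]; exact lt_irrefl _)
  · intro z hz
    by_contra hcon
    obtain ⟨w, hw2, hwre⟩ := hsqrt z hcon
    have hHne : H ≠ 0 := by
      intro hc
      rw [hc] at hz
      simp at hz
    have hHz : H.eval z = 0 := (mem_roots hHne).1 hz
    have hFw : F.eval w = G.eval z := by rw [heval, hw2, hHz, mul_zero, add_zero]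
    have hFmw : F.eval (-w) = G.eval z := by
      have hsq : (-w) ^ 2 = z := by rw [neg_pow]; simpa using hw2
      rw [heval, hsq, hHz]
      ring
    rcases eq_or_ne (G.eval z) 0 with hG0 | hG0
    · exact hnoroot w hwre (by rw [hFw, hG0])
    · have habs_eq : ‖F.eval (-w)‖ = ‖F.eval w‖ := by
        rw [hFw, hFmw]
      rcases eq_or_ne F.roots 0 with hr0 | hr0
      · -- F is a nonzero constant: then `h = 0`, contradiction
        have hfact := (C_leadingCoeff_mul_prod_multiset_X_sub_C (IsAlgClosed.card_roots_eq_natDegree (p := F))).symm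
        rw [hr0] at hfact
        simp only [Multiset.map_zero, Multiset.prod_zero, mul_one] at hfact
        have hHall : ∀ v : ℂ, v ≠ 0 → H.eval v = 0 := by
          intro v hv
          obtain ⟨u, hu⟩ := IsAlgClosed.exists_pow_nat_eq v (n := 2) (by norm_num)
          have hu0 : u ≠ 0 := by
            intro hc
            rw [hc] at hu
            simp at hu
            exact hv hu.symm
          have e1 : F.eval u = F.leadingCoeff := by conv_lhs => rw [hfact, eval_C]
          have e2 : F.eval (-u) = F.leadingCoeff := by conv_lhs => rw [hfact, eval_C]
          have e3 := (heval u).symm.trans e1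
          have e4 := (heval (-u)).symm.trans e2
          rw [neg_pow] at e4
          simp at e4
          have : u * H.eval (u ^ 2) = 0 := by linear_combination (e3 - e4) / 2
          rcases mul_eq_zero.1 this with hc | hc
          · exact absurd hc hu0
          · rw [← hu]; exact hc
        have : H = 0 := by
          apply Polynomial.eq_zero_of_infinite_isRoot
          apply Set.Infinite.mono (s := ({0}ᶜ : Set ℂ))
          · intro v hv
            exact hHall v hv
          · exact Set.Finite.infinite_compl (Set.finite_singleton 0)
        exact hHne this
      · exact absurd (hb_key f hstable hr0 w hwre) (by rw [habs_eq]; exact lt_irrefl _)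
end

section
/- The two parity parts of the distribution of X are log-concave on their lattices: for every integer k, P(X = k)² ≥ P(X = k − 1)·P(X = k + 1), and for every half-integer k ∈ ℤ + 1/2, P(X = k)² ≥ P(X = k − 1)·P(X = k + 1). -/
set_option maxHeartbeats 1000000

open MeasureTheory ProbabilityTheory Finset
open scoped Classical


def GoodSeq (c : ℤ → ℝ) : Prop :=
  (∀ m, 0 ≤ c m) ∧
  (∀ j k : ℤ, j ≤ k → c j * c (k+2) ≤ c (j+2) * c k) ∧
  (∀ a b : ℤ, a ≤ b → Odd (b - a) → c (a-1) * c (b+1) ≤ c a * c b)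

lemma goodSeq_delta : GoodSeq (fun m => if m = 0 then 1 else 0) := by
  refine ⟨fun m => by dsimp only; split_ifs <;> norm_num, ?_, ?_⟩
  · intro j k hjk
    dsimp only
    have h : (if j = 0 then (1:ℝ) else 0) * (if k + 2 = 0 then 1 else 0) = 0 := by
      rcases eq_or_ne j 0 with h1 | h1
      · rcases eq_or_ne (k+2) 0 with h2 | h2
        · omega
        · simp [h2]
      · simp [h1]
    rw [h]
    split_ifs <;> norm_num
  · intro a b hab _
    dsimp only
    have h : (if a - 1 = 0 then (1:ℝ) else 0) * (if b + 1 = 0 then 1 else 0) = 0 := by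
      rcases eq_or_ne (a-1) 0 with h1 | h1
      · rcases eq_or_ne (b+1) 0 with h2 | h2
        · omega
        · simp [h2]
      · simp [h1]
    rw [h]
    split_ifs <;> norm_num

lemma goodSeq_step {c : ℤ → ℝ} (L T W : ℝ) (hL : 0 ≤ L) (hT : 0 ≤ T) (hW : 0 ≤ W)
    (hc : GoodSeq c) :
    GoodSeq (fun m => L * c m + T * c (m-1) + W * c (m-2)) := by
  obtain ⟨h0, hF, hG⟩ := hc
  refine ⟨?_, ?_, ?_⟩
  · intro m
    have := h0 m; have := h0 (m-1); have := h0 (m-2)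
    positivity
  · intro j k hjk
    dsimp only
    have hcase : k = j ∨ k = j + 1 ∨ j + 2 ≤ k := by omega
    rcases hcase with rfl | rfl | hk
    · apply le_of_eq; ring_nf
    · -- k = j + 1
      have A0 := hF j (j+1) (by omega)
      have A1 := hF (j-1) j (by omega)
      have A2 := hF (j-2) (j-1) (by omega)
      have B01 := hF (j-1) (j+1) (by omega)
      have B12 := hF (j-2) j (by omega)
      have B02 := hG (j-1) (j+2) (by omega) ⟨1, by ring⟩
      have e1 : j - 1 + 2 = j + 1 := by ring
      have e2 : j - 2 + 2 = j := by ring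
      have e3 : j + 1 + 2 = j + 3 := by ring
      have e4 : j - 1 + 1 = j := by ring
      have e5 : j + 2 + 1 = j + 3 := by ring
      have e6 : j - 1 + 2 = j + 1 := by ring
      ring_nf at A0 A1 A2 B01 B12 B02 ⊢
      nlinarith [mul_nonneg (mul_nonneg hL hL) (sub_nonneg.mpr A0),
        mul_nonneg (mul_nonneg hT hT) (sub_nonneg.mpr A1),
        mul_nonneg (mul_nonneg hW hW) (sub_nonneg.mpr A2),
        mul_nonneg (mul_nonneg hL hT) (sub_nonneg.mpr B01),
        mul_nonneg (mul_nonneg hT hW) (sub_nonneg.mpr B12),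
        mul_nonneg (mul_nonneg hL hW) (sub_nonneg.mpr B02)]
    · -- j + 2 ≤ k
      have F00 := hF j k (by omega)
      have F01 := hF j (k-1) (by omega)
      have F02 := hF j (k-2) (by omega)
      have F10 := hF (j-1) k (by omega)
      have F11 := hF (j-1) (k-1) (by omega)
      have F12 := hF (j-1) (k-2) (by omega)
      have F20 := hF (j-2) k (by omega)
      have F21 := hF (j-2) (k-1) (by omega)
      have F22 := hF (j-2) (k-2) (by omega)
      have e1 : j - 1 + 2 = j + 1 := by ring
      have e2 : j - 2 + 2 = j := by ring
      have e3 : k - 1 + 2 = k + 1 := by ring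
      have e4 : k - 2 + 2 = k := by ring
      ring_nf at F00 F01 F02 F10 F11 F12 F20 F21 F22 ⊢
      nlinarith [mul_nonneg (mul_nonneg hL hL) (sub_nonneg.mpr F00),
        mul_nonneg (mul_nonneg hL hT) (sub_nonneg.mpr F01),
        mul_nonneg (mul_nonneg hL hW) (sub_nonneg.mpr F02),
        mul_nonneg (mul_nonneg hT hL) (sub_nonneg.mpr F10),
        mul_nonneg (mul_nonneg hT hT) (sub_nonneg.mpr F11),
        mul_nonneg (mul_nonneg hT hW) (sub_nonneg.mpr F12),
        mul_nonneg (mul_nonneg hW hL) (sub_nonneg.mpr F20),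
        mul_nonneg (mul_nonneg hW hT) (sub_nonneg.mpr F21),
        mul_nonneg (mul_nonneg hW hW) (sub_nonneg.mpr F22)]
  · intro a b hab hodd
    obtain ⟨m, hm⟩ := hodd
    dsimp only
    have hcase : b = a + 1 ∨ a + 3 ≤ b := by omega
    rcases hcase with rfl | hb
    · have D0 := hG a (a+1) (by omega) ⟨0, by ring⟩
      have D1 := hG (a-1) a (by omega) ⟨0, by ring⟩
      have D2 := hG (a-2) (a-1) (by omega) ⟨0, by ring⟩
      have E01 := hF (a-2) a (by omega)
      have E12 := hF (a-3) (a-1) (by omega)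
      have E02 := hG (a-2) (a+1) (by omega) ⟨1, by ring⟩
      have e1 : a - 2 + 2 = a := by ring
      have e2 : a - 3 + 2 = a - 1 := by ring
      have e3 : a - 1 + 1 = a := by ring
      have e4 : a - 2 + 1 = a - 1 := by ring
      have e5 : a - 1 - 1 = a - 2 := by ring
      have e6 : a + 1 + 1 = a + 2 := by ring
      ring_nf at D0 D1 D2 E01 E12 E02 ⊢
      nlinarith [mul_nonneg (mul_nonneg hL hL) (sub_nonneg.mpr D0),
        mul_nonneg (mul_nonneg hT hT) (sub_nonneg.mpr D1),
        mul_nonneg (mul_nonneg hW hW) (sub_nonneg.mpr D2),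
        mul_nonneg (mul_nonneg hL hT) (sub_nonneg.mpr E01),
        mul_nonneg (mul_nonneg hT hW) (sub_nonneg.mpr E12),
        mul_nonneg (mul_nonneg hL hW) (sub_nonneg.mpr E02)]
    · have D0 := hG a b (by omega) ⟨m, by omega⟩
      have D1 := hG (a-1) (b-1) (by omega) ⟨m, by omega⟩
      have D2 := hG (a-2) (b-2) (by omega) ⟨m, by omega⟩
      have E01 := hF (a-2) (b-1) (by omega)
      have E12 := hF (a-3) (b-2) (by omega)
      have G02a := hG a (b-2) (by omega) ⟨m-1, by omega⟩
      have G02b := hG (a-2) b (by omega) ⟨m+1, by omega⟩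
      have e1 : a - 2 + 2 = a := by ring
      have e2 : a - 3 + 2 = a - 1 := by ring
      have e3 : b - 1 + 2 = b + 1 := by ring
      have e4 : b - 2 + 2 = b := by ring
      have e5 : b - 1 + 1 = b := by ring
      have e6 : b - 2 + 1 = b - 1 := by ring
      have e7 : a - 1 - 1 = a - 2 := by ring
      have e8 : a - 2 - 1 = a - 3 := by ring
      ring_nf at D0 D1 D2 E01 E12 G02a G02b ⊢
      nlinarith [mul_nonneg (mul_nonneg hL hL) (sub_nonneg.mpr D0),
        mul_nonneg (mul_nonneg hT hT) (sub_nonneg.mpr D1),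
        mul_nonneg (mul_nonneg hW hW) (sub_nonneg.mpr D2),
        mul_nonneg (mul_nonneg hL hT) (sub_nonneg.mpr E01),
        mul_nonneg (mul_nonneg hT hW) (sub_nonneg.mpr E12),
        mul_nonneg (mul_nonneg hL hW) (sub_nonneg.mpr G02a),
        mul_nonneg (mul_nonneg hL hW) (sub_nonneg.mpr G02b)]


lemma prob_eq_coeff {Ω : Type*} [MeasureSpace Ω] [IsProbabilityMeasure (ℙ : Measure Ω)]
    {n : ℕ} (X : Fin n → Ω → ℝ) (T W : Fin n → ℝ)
    (hmeas : ∀ i, Measurable (X i))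
    (hindep : iIndepFun X ℙ)
    (hT0 : ∀ i, 0 ≤ T i) (hW0 : ∀ i, 0 ≤ W i) (hTW1 : ∀ i, T i + W i ≤ 1)
    (hT : ∀ i, (ℙ {ω | X i ω = 1/2}).toReal = T i)
    (hW : ∀ i, (ℙ {ω | X i ω = 1}).toReal = W i)
    (hL : ∀ i, (ℙ {ω | X i ω = 0}).toReal = 1 - T i - W i)
    (s : Finset (Fin n)) :
    ∃ c : ℤ → ℝ, GoodSeq c ∧
      ∀ m : ℤ, (ℙ {ω | (∑ i ∈ s, X i ω) = (m:ℝ)/2}).toReal = c m := by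
  induction s using Finset.induction_on with
  | empty =>
    refine ⟨_, goodSeq_delta, ?_⟩
    intro m
    by_cases hm : m = 0
    · subst hm
      have : {ω : Ω | (∑ i ∈ (∅ : Finset (Fin n)), X i ω) = ((0:ℤ):ℝ)/2} = Set.univ := by
        ext ω; simp
      rw [this]; simp
    · have : {ω : Ω | (∑ i ∈ (∅ : Finset (Fin n)), X i ω) = ((m:ℤ):ℝ)/2} = ∅ := by
        ext ω
        simp only [Finset.sum_empty, Set.mem_setOf_eq, Set.mem_empty_iff_false, iff_false]
        intro h
        have : (m:ℝ) = 0 := by linarith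
        exact_mod_cast hm (by exact_mod_cast this)
      rw [this]; simp [hm]
  | @insert j s hj ih =>
    obtain ⟨c, hg, hP⟩ := ih
    have hL0 : (0:ℝ) ≤ 1 - T j - W j := by linarith [hTW1 j]
    refine ⟨fun m => (1 - T j - W j) * c m + T j * c (m-1) + W j * c (m-2),
      goodSeq_step _ _ _ hL0 (hT0 j) (hW0 j) hg, ?_⟩
    intro m
    set S : Ω → ℝ := fun ω => ∑ i ∈ s, X i ω with hS
    have hSmeas : Measurable S := Finset.measurable_sum s (fun i _ => hmeas i)
    have hSind : IndepFun S (X j) ℙ := by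
      have h := hindep.indepFun_finsetSum_of_notMem hmeas hj
      have he : (∑ i ∈ s, X i) = S := by ext ω; simp [hS, Finset.sum_apply]
      rwa [he] at h
    -- the three atoms
    set E : Set Ω := {ω | X j ω + S ω = (m:ℝ)/2} with hE
    have hkey : ∀ (v : ℝ) (d : ℤ), (m:ℝ)/2 - v = ((m-d:ℤ):ℝ)/2 →
        ℙ (E ∩ {ω | X j ω = v}) =
          ℙ {ω | S ω = ((m-d:ℤ):ℝ)/2} * ℙ {ω | X j ω = v} := by
      intro v d hd
      have hset : E ∩ {ω | X j ω = v} =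
          S ⁻¹' {((m-d:ℤ):ℝ)/2} ∩ (X j) ⁻¹' {v} := by
        ext ω
        simp only [hE, Set.mem_inter_iff, Set.mem_setOf_eq, Set.mem_preimage,
          Set.mem_singleton_iff]
        constructor
        · rintro ⟨h1, h2⟩
          refine ⟨?_, h2⟩
          rw [← hd, ← h2]; linarith
        · rintro ⟨h1, h2⟩
          refine ⟨?_, h2⟩
          rw [h2]; rw [← hd] at h1; linarith
      rw [hset, Set.inter_comm]
      rw [(hSind.symm).measure_inter_preimage_eq_mul _ _ (measurableSet_singleton v)
        (measurableSet_singleton _)]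
      rw [mul_comm]
      rfl
    have hA0 : MeasurableSet {ω | X j ω = (0:ℝ)} := hmeas j (measurableSet_singleton 0)
    have hAh : MeasurableSet {ω | X j ω = (1/2:ℝ)} := hmeas j (measurableSet_singleton _)
    have hA1 : MeasurableSet {ω | X j ω = (1:ℝ)} := hmeas j (measurableSet_singleton 1)
    have hEmeas : MeasurableSet E := by
      have : Measurable (fun ω => X j ω + S ω) := (hmeas j).add hSmeas
      exact this (measurableSet_singleton _)
    have hd0h : Disjoint {ω : Ω | X j ω = (0:ℝ)} {ω | X j ω = (1/2:ℝ)} := by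
      rw [Set.disjoint_left]; intro ω h1 h2
      simp only [Set.mem_setOf_eq] at h1 h2; rw [h1] at h2; norm_num at h2
    have hd01 : Disjoint {ω : Ω | X j ω = (0:ℝ)} {ω | X j ω = (1:ℝ)} := by
      rw [Set.disjoint_left]; intro ω h1 h2
      simp only [Set.mem_setOf_eq] at h1 h2; rw [h1] at h2; norm_num at h2
    have hdh1 : Disjoint {ω : Ω | X j ω = (1/2:ℝ)} {ω | X j ω = (1:ℝ)} := by
      rw [Set.disjoint_left]; intro ω h1 h2
      simp only [Set.mem_setOf_eq] at h1 h2; rw [h1] at h2; norm_num at h2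
    set U : Set Ω := {ω | X j ω = (0:ℝ)} ∪ {ω | X j ω = (1/2:ℝ)} ∪ {ω | X j ω = (1:ℝ)}
      with hUdef
    have hUmeas : MeasurableSet U := (hA0.union hAh).union hA1
    have hU1 : ℙ U = 1 := by
      have h1 : ℙ U = ℙ {ω | X j ω = (0:ℝ)} + ℙ {ω | X j ω = (1/2:ℝ)}
          + ℙ {ω | X j ω = (1:ℝ)} := by
        rw [hUdef, measure_union (by
          exact Set.disjoint_union_left.mpr ⟨hd01, hdh1⟩) hA1,
          measure_union hd0h hAh]
      have h2 : (ℙ U).toReal = 1 := by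
        rw [h1, ENNReal.toReal_add (by finiteness) (by finiteness),
          ENNReal.toReal_add (by finiteness) (by finiteness), hL j, hT j, hW j]
        ring
      exact (ENNReal.toReal_eq_one_iff _).mp h2
    have hNull : ℙ Uᶜ = 0 := (prob_compl_eq_zero_iff hUmeas).mpr hU1
    have hsplit : ℙ E = ℙ (E ∩ {ω | X j ω = (0:ℝ)}) + ℙ (E ∩ {ω | X j ω = (1/2:ℝ)})
        + ℙ (E ∩ {ω | X j ω = (1:ℝ)}) := by
      have h1 : ℙ E = ℙ (E ∩ U) := by
        refine le_antisymm ?_ (measure_mono Set.inter_subset_left)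
        calc ℙ E = ℙ (E ∩ U ∪ E ∩ Uᶜ) := by rw [Set.inter_union_compl]
          _ ≤ ℙ (E ∩ U) + ℙ (E ∩ Uᶜ) := measure_union_le _ _
          _ ≤ ℙ (E ∩ U) + ℙ Uᶜ := add_le_add_right (measure_mono Set.inter_subset_right) _
          _ = ℙ (E ∩ U) := by rw [hNull, add_zero]
      rw [h1, hUdef, Set.inter_union_distrib_left, Set.inter_union_distrib_left,
        measure_union (by
          refine Set.disjoint_union_left.mpr ⟨?_, ?_⟩
          · exact (hd01.mono Set.inter_subset_right Set.inter_subset_right)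
          · exact (hdh1.mono Set.inter_subset_right Set.inter_subset_right))
          (hEmeas.inter hA1),
        measure_union (hd0h.mono Set.inter_subset_right Set.inter_subset_right)
          (hEmeas.inter hAh)]
    have hgoalset : {ω : Ω | (∑ i ∈ insert j s, X i ω) = (m:ℝ)/2} = E := by
      ext ω
      simp only [hE, Set.mem_setOf_eq, Finset.sum_insert hj, hS]
    rw [hgoalset, hsplit]
    rw [hkey 0 0 (by push_cast; ring), hkey (1/2) 1 (by push_cast; ring),
      hkey 1 2 (by push_cast; ring)]
    rw [ENNReal.toReal_add (by finiteness) (by finiteness),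
      ENNReal.toReal_add (by finiteness) (by finiteness),
      ENNReal.toReal_mul, ENNReal.toReal_mul, ENNReal.toReal_mul,
      hL j, hT j, hW j, hP (m - 0), hP (m - 1), hP (m - 2)]
    dsimp only
    norm_num
    ring


/-- the two parity parts of the distribution of `X` are log-concave:
for every integer `k`, `P(X = k)² ≥ P(X = k-1)·P(X = k+1)`, and for every
half-integer `k + 1/2`, `P(X = k+1/2)² ≥ P(X = k-1/2)·P(X = k+3/2)`. -/
theorem poisson_trinomial_parity_log_concave
    {Ω : Type*} [MeasureSpace Ω] [IsProbabilityMeasure (ℙ : Measure Ω)]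
    {n : ℕ} (X : Fin n → Ω → ℝ) (T W : Fin n → ℝ)
    (hmeas : ∀ i, Measurable (X i))
    (hindep : iIndepFun X ℙ)
    (hT0 : ∀ i, 0 ≤ T i) (hW0 : ∀ i, 0 ≤ W i) (hTW1 : ∀ i, T i + W i ≤ 1)
    (hT : ∀ i, (ℙ {ω | X i ω = 1/2}).toReal = T i)
    (hW : ∀ i, (ℙ {ω | X i ω = 1}).toReal = W i)
    (hL : ∀ i, (ℙ {ω | X i ω = 0}).toReal = 1 - T i - W i)
    (hposZ : 0 < (ℙ {ω | ∃ m : ℤ, (∑ i, X i ω) = (m : ℝ)}).toReal)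
    (hposH : 0 < (ℙ {ω | ∃ m : ℤ, (∑ i, X i ω) = (m : ℝ) + 1/2}).toReal) :
    (∀ k : ℤ, (ℙ {ω | (∑ i, X i ω) = (k : ℝ)}).toReal ^ 2 ≥
        (ℙ {ω | (∑ i, X i ω) = (k : ℝ) - 1}).toReal *
        (ℙ {ω | (∑ i, X i ω) = (k : ℝ) + 1}).toReal) ∧
    (∀ k : ℤ, (ℙ {ω | (∑ i, X i ω) = (k : ℝ) + 1/2}).toReal ^ 2 ≥
        (ℙ {ω | (∑ i, X i ω) = (k : ℝ) + 1/2 - 1}).toReal *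
        (ℙ {ω | (∑ i, X i ω) = (k : ℝ) + 1/2 + 1}).toReal) := by
  obtain ⟨c, hg, hcP⟩ := prob_eq_coeff X T W hmeas hindep hT0 hW0 hTW1 hT hW hL Finset.univ
  have conv : ∀ (a : ℤ) (x : ℝ), ((a:ℝ))/2 = x →
      (ℙ {ω | (∑ i, X i ω) = x}).toReal = c a := by
    intro a x hx; rw [← hx]; exact hcP a
  have hF := hg.2.1
  constructor
  · intro k
    rw [conv (2*k) ((k:ℤ):ℝ) (by push_cast; ring),
      conv (2*k-2) (((k:ℤ):ℝ)-1) (by push_cast; ring),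
      conv (2*k+2) (((k:ℤ):ℝ)+1) (by push_cast; ring)]
    have h := hF (2*k-2) (2*k) (by omega)
    have e : (2*k-2+2 : ℤ) = 2*k := by ring
    rw [e] at h
    rw [pow_two]
    exact h
  · intro k
    rw [conv (2*k+1) (((k:ℤ):ℝ)+1/2) (by push_cast; ring),
      conv (2*k-1) (((k:ℤ):ℝ)+1/2-1) (by push_cast; ring),
      conv (2*k+3) (((k:ℤ):ℝ)+1/2+1) (by push_cast; ring)]
    have h := hF (2*k-1) (2*k+1) (by omega)
    have e : (2*k-1+2 : ℤ) = 2*k+1 := by ring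
    have e2 : (2*k+1+2 : ℤ) = 2*k+3 := by ring
    rw [e, e2] at h
    rw [pow_two]
    exact h
end

section
/- If L_i, T_i, W_i > 0 for all i, then both conditional distributions are Poisson binomial: there exist q_1,…,q_n ∈ [0,1] and r_1,…,r_{n−1} ∈ [0,1] such that, as polynomials in z, ∑_{k=0}^n P(X = k)·z^k = P(X ∈ ℤ)·∏_{j=1}^n (1 − q_j + q_j·z) and ∑_{k=0}^{n−1} P(X = k + 1/2)·z^k = P(X ∈ ℤ + 1/2)·∏_{j=1}^{n−1} (1 − r_j + r_j·z). -/
open MeasureTheory ProbabilityTheory Finset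
open scoped Classical

section AuxPoisson
open Finset Polynomial

lemma sum_range_two_mul {M : Type*} [AddCommMonoid M] (m : ℕ) (g : ℕ → M) :
    ∑ j ∈ Finset.range (2*m), g j = ∑ k ∈ Finset.range m, (g (2*k) + g (2*k+1)) := by
  induction m with
  | zero => simp
  | succ m ih =>
      rw [Finset.sum_range_succ, ← ih, Nat.mul_succ, Finset.sum_range_succ, Finset.sum_range_succ]
      ring_nf
      exact add_assoc _ _ _

lemma quad_abs_lt (L T W : ℝ) (hL : 0 < L) (hT : 0 < T) (hW : 0 ≤ W) (s : ℂ)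
    (hs : 0 < s.re) :
    ‖(L:ℂ) + T * (-s) + W * (-s)^2‖ < ‖(L:ℂ) + T * s + W * s^2‖ := by
  have h1 : Complex.normSq ((L:ℂ) + T * (-s) + W * (-s)^2) <
      Complex.normSq ((L:ℂ) + T * s + W * s^2) := by
    simp only [Complex.normSq_apply, Complex.add_re, Complex.add_im, Complex.mul_re,
      Complex.mul_im, Complex.ofReal_re, Complex.ofReal_im, Complex.neg_re, Complex.neg_im,
      pow_two]
    nlinarith [sq_nonneg s.re, sq_nonneg s.im, mul_pos hL hs,
      mul_nonneg (mul_nonneg hW (le_of_lt hs)) (sq_nonneg s.im),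
      mul_nonneg (mul_nonneg hW (le_of_lt hs)) (sq_nonneg s.re)]
  have := Real.sqrt_lt_sqrt (Complex.normSq_nonneg _) h1
  simpa [Complex.norm_def] using this

lemma prod_abs_lt {n : ℕ} (hn : 0 < n) (L T W : Fin n → ℝ)
    (hL : ∀ i, 0 < L i) (hT : ∀ i, 0 < T i) (hW : ∀ i, 0 ≤ W i) (s : ℂ) (hs : 0 < s.re) :
    ‖∏ i, ((L i : ℂ) + T i * (-s) + W i * (-s)^2)‖ <
    ‖∏ i, ((L i : ℂ) + T i * s + W i * s^2)‖ := by
  rw [norm_prod, norm_prod]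
  have hlt : ∀ i : Fin n, ‖(L i : ℂ) + T i * (-s) + W i * (-s)^2‖ <
      ‖(L i : ℂ) + T i * s + W i * s^2‖ :=
    fun i => quad_abs_lt _ _ _ (hL i) (hT i) (hW i) s hs
  by_cases hz : ∀ i : Fin n, 0 < ‖(L i : ℂ) + T i * (-s) + W i * (-s)^2‖
  · exact Finset.prod_lt_prod_of_nonempty (fun i _ => hz i) (fun i _ => hlt i)
      (Finset.univ_nonempty_iff.mpr ⟨⟨0, hn⟩⟩)
  · push_neg at hz
    obtain ⟨i, hi⟩ := hz
    have hi0 : ‖(L i : ℂ) + T i * (-s) + W i * (-s)^2‖ = 0 :=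
      le_antisymm hi (norm_nonneg _)
    calc ∏ j, ‖(L j : ℂ) + T j * (-s) + W j * (-s)^2‖ = 0 :=
          Finset.prod_eq_zero (Finset.mem_univ i) hi0
      _ < ∏ j, ‖(L j : ℂ) + T j * s + W j * s^2‖ :=
          Finset.prod_pos fun j _ => lt_of_le_of_lt (norm_nonneg _) (hlt j)

lemma re_eq_zero_of_abs_eq {n : ℕ} (hn : 0 < n) (L T W : Fin n → ℝ)
    (hL : ∀ i, 0 < L i) (hT : ∀ i, 0 < T i) (hW : ∀ i, 0 ≤ W i) (s : ℂ)
    (habs : ‖∏ i, ((L i : ℂ) + T i * (-s) + W i * (-s)^2)‖ =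
      ‖∏ i, ((L i : ℂ) + T i * s + W i * s^2)‖) : s.re = 0 := by
  by_contra h
  rcases lt_or_gt_of_ne h with h1 | h1
  · have h2 : (0:ℝ) < (-s).re := by simpa using neg_pos.mpr h1
    have := prod_abs_lt hn L T W hL hT hW (-s) h2
    rw [neg_neg] at this
    exact absurd habs.symm (ne_of_lt this)
  · exact absurd habs (ne_of_lt (prod_abs_lt hn L T W hL hT hW s h1))

lemma even_part_eval {R : Type*} [CommRing R] (P : R[X]) (m : ℕ) (hdeg : P.natDegree < 2*m)
    (s : R) : (∑ k ∈ Finset.range m, P.coeff (2*k) * (s^2)^k) * 2 = P.eval s + P.eval (-s) := by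
  rw [Polynomial.eval_eq_sum_range' hdeg, Polynomial.eval_eq_sum_range' hdeg,
    ← Finset.sum_add_distrib, sum_range_two_mul m (fun j => P.coeff j * s^j + P.coeff j * (-s)^j)]
  rw [Finset.sum_mul]
  apply Finset.sum_congr rfl
  intro k _
  have h1 : (-s)^(2*k) = (s^2)^k := by rw [pow_mul]; ring_nf
  have h2 : (-s)^(2*k+1) = -(s^2)^k * s := by rw [pow_succ, h1]; ring
  have h3 : s^(2*k) = (s^2)^k := by rw [pow_mul]
  have h4 : s^(2*k+1) = (s^2)^k * s := by rw [pow_succ, h3]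
  rw [h1, h2, h3, h4]; ring

lemma odd_part_eval {R : Type*} [CommRing R] (P : R[X]) (m : ℕ) (hdeg : P.natDegree < 2*m)
    (s : R) : (∑ k ∈ Finset.range m, P.coeff (2*k+1) * (s^2)^k) * (2*s)
      = P.eval s - P.eval (-s) := by
  rw [Polynomial.eval_eq_sum_range' hdeg, Polynomial.eval_eq_sum_range' hdeg,
    ← Finset.sum_sub_distrib, sum_range_two_mul m (fun j => P.coeff j * s^j - P.coeff j * (-s)^j)]
  rw [Finset.sum_mul]
  apply Finset.sum_congr rfl
  intro k _
  have h1 : (-s)^(2*k) = (s^2)^k := by rw [pow_mul]; ring_nf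
  have h2 : (-s)^(2*k+1) = -(s^2)^k * s := by rw [pow_succ, h1]; ring
  have h3 : s^(2*k) = (s^2)^k := by rw [pow_mul]
  have h4 : s^(2*k+1) = (s^2)^k * s := by rw [pow_succ, h3]
  rw [h1, h2, h3, h4]; ring

lemma list_prod_map_eq {α M : Type*} [CommMonoid M] (L : List α) (g : α → M) :
    (L.map g).prod = ∏ i : Fin L.length, g (L.get i) := by
  conv_lhs => rw [← List.ofFn_get L, List.map_ofFn]
  rw [List.prod_ofFn]
  rfl

lemma factor_neg_real_roots (A : Polynomial ℝ) (hA : A ≠ 0) (m : ℕ) (hdeg : A.natDegree ≤ m)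
    (hroots : ∀ z ∈ (A.map (algebraMap ℝ ℂ)).roots, z.im = 0 ∧ z.re < 0) :
    ∃ q : Fin m → ℝ, (∀ j, q j ∈ Set.Icc (0:ℝ) 1) ∧
      ∀ z : ℝ, A.eval z = A.eval 1 * ∏ j, (1 - q j + q j * z) := by
  classical
  set Ac := A.map (algebraMap ℝ ℂ) with hAcdef
  have hAc : Ac ≠ 0 := (Polynomial.map_ne_zero_iff (algebraMap ℝ ℂ).injective).mpr hA
  have hsplits : Ac.Splits := IsAlgClosed.splits Ac
  have hcard : Ac.roots.card = Ac.natDegree := (Polynomial.splits_iff_card_roots).mp hsplits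
  have hfact := Polynomial.C_leadingCoeff_mul_prod_multiset_X_sub_C hcard
  have hLC : Ac.leadingCoeff = (A.leadingCoeff : ℂ) := by
    rw [hAcdef, Polynomial.leadingCoeff_map]; rfl
  set c : ℝ := A.leadingCoeff with hc
  have hc0 : c ≠ 0 := Polynomial.leadingCoeff_ne_zero.mpr hA
  set ρ : Multiset ℝ := Ac.roots.map Complex.re with hρ
  have hρneg : ∀ x ∈ ρ, x < 0 := by
    intro x hx
    obtain ⟨r, hr, rfl⟩ := Multiset.mem_map.mp hx
    exact (hroots r hr).2
  have heval : ∀ z : ℝ, A.eval z = c * (ρ.map (fun x => z - x)).prod := by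
    intro z
    have h1 : ((A.eval z : ℝ) : ℂ) = Ac.eval (z : ℂ) := by
      rw [hAcdef, Polynomial.eval_map]
      exact (Polynomial.eval₂_at_apply (algebraMap ℝ ℂ) z).symm
    have h2 : Ac.eval (z : ℂ) = Ac.leadingCoeff * ((Ac.roots.map fun w => (z : ℂ) - w).prod) := by
      conv_lhs => rw [← hfact]
      rw [Polynomial.eval_mul, Polynomial.eval_C, Polynomial.eval_multiset_prod,
        Multiset.map_map]
      simp
    have h3 : (Ac.roots.map fun w => (z : ℂ) - w) = (ρ.map fun x => ((z - x : ℝ) : ℂ)) := by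
      rw [hρ, Multiset.map_map]
      apply Multiset.map_congr rfl
      intro r hr
      have him : r.im = 0 := (hroots r hr).1
      apply Complex.ext <;> simp [him]
    have h4 : ((ρ.map fun x => ((z - x : ℝ) : ℂ))).prod
        = (((ρ.map fun x => z - x).prod : ℝ) : ℂ) := by
      rw [show ((((ρ.map fun x => z - x).prod : ℝ)) : ℂ)
          = algebraMap ℝ ℂ ((ρ.map fun x => z - x).prod) from rfl,
        map_multiset_prod]
      conv_rhs => rw [Multiset.map_map]
      rfl
    have := h1.trans (h2.trans (by rw [h3, h4, hLC, ← Complex.ofReal_mul]))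
    exact_mod_cast this
  have hcardρ : Multiset.card ρ = A.natDegree := by
    rw [hρ, Multiset.card_map, hcard, hAcdef]
    exact Polynomial.natDegree_map (algebraMap ℝ ℂ)
  set L : List ℝ := ρ.toList with hLdef
  have hLlen : L.length = A.natDegree := by rw [hLdef, Multiset.length_toList, hcardρ]
  have hLneg : ∀ x ∈ L, x < 0 := fun x hx => hρneg x (by rwa [← Multiset.mem_toList])
  have hLprod : ∀ f : ℝ → ℝ, (ρ.map f).prod = (L.map f).prod := by
    intro f
    conv_lhs => rw [← Multiset.coe_toList ρ]
    rw [Multiset.map_coe, Multiset.prod_coe]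
  set qn : ℕ → ℝ := fun j => if h : j < L.length then (1 - L.get ⟨j, h⟩)⁻¹ else 0 with hqn
  have hqnmem : ∀ j, qn j ∈ Set.Icc (0:ℝ) 1 := by
    intro j
    by_cases h : j < L.length
    · have hx : L.get ⟨j, h⟩ < 0 := hLneg _ (L.get_mem _)
      have h1 : (1:ℝ) < 1 - L.get ⟨j, h⟩ := by linarith
      simp only [hqn, dif_pos h]
      constructor
      · positivity
      · rw [inv_le_one_iff₀]; right; linarith
    · simp only [hqn, dif_neg h]
      exact ⟨le_refl 0, zero_le_one⟩
  refine ⟨fun j => qn j, fun j => hqnmem j, fun z => ?_⟩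
  have hd : L.length ≤ m := by rw [hLlen]; exact hdeg
  have hsplit : ∀ z : ℝ, ∏ j : Fin m, (1 - qn j + qn j * z)
      = (L.map (fun x => 1 - (1-x)⁻¹ + (1-x)⁻¹ * z)).prod := by
    intro z
    rw [Fin.prod_univ_eq_prod_range (fun j => (1 - qn j + qn j * z)) m]
    rw [Finset.range_eq_Ico, ← Finset.prod_Ico_consecutive _ (Nat.zero_le L.length) hd]
    have h2 : ∏ j ∈ Finset.Ico L.length m, (1 - qn j + qn j * z) = 1 := by
      apply Finset.prod_eq_one
      intro j hj
      have hnot : ¬ (j < L.length) := by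
        have := (Finset.mem_Ico.mp hj).1; omega
      simp only [hqn, dif_neg hnot]; ring
    rw [h2, mul_one, ← Finset.range_eq_Ico]
    rw [list_prod_map_eq L (fun x => 1 - (1-x)⁻¹ + (1-x)⁻¹ * z)]
    rw [← Fin.prod_univ_eq_prod_range (fun j => (1 - qn j + qn j * z)) L.length]
    apply Finset.prod_congr rfl
    intro i _
    simp only [hqn, dif_pos i.isLt]
  rw [hsplit, heval z, heval 1, hLprod, hLprod, mul_assoc, ← List.prod_map_mul]
  refine congrArg _ (congrArg List.prod (List.map_congr_left fun x hx => ?_))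
  have hx0 : x < 0 := hLneg x hx
  have hne : 1 - x ≠ 0 := by linarith
  field_simp
  ring

section FF
open Polynomial
variable {n : ℕ} (p : Fin n → Fin 3 → ℝ)

noncomputable def Fpoly : Polynomial ℝ :=
  ∏ i, ∑ c : Fin 3, Polynomial.C (p i c) * Polynomial.X ^ (c : ℕ)

lemma Fpoly_coeff (M : ℕ) : (Fpoly p).coeff M
    = ∑ v ∈ Finset.univ.filter (fun v : Fin n → Fin 3 => ∑ i, ((v i : ℕ)) = M),
        ∏ i, p i (v i) := by
  classical
  rw [Fpoly, Finset.prod_univ_sum, Fintype.piFinset_univ, Polynomial.finset_sum_coeff]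
  rw [Finset.sum_filter]
  apply Finset.sum_congr rfl
  intro v _
  rw [Finset.prod_mul_distrib, ← map_prod, Finset.prod_pow_eq_pow_sum,
    Polynomial.coeff_C_mul, Polynomial.coeff_X_pow]
  by_cases h : ∑ i, ((v i : ℕ)) = M
  · rw [if_pos h, if_pos h.symm, mul_one]
  · rw [if_neg h, if_neg (fun hh => h hh.symm), mul_zero]

lemma Fpoly_natDegree : (Fpoly p).natDegree ≤ 2*n := by
  refine le_trans (Polynomial.natDegree_prod_le _ _) ?_
  have : ∀ i : Fin n, (∑ c : Fin 3, Polynomial.C (p i c) * Polynomial.X ^ (c : ℕ)).natDegree ≤ 2 := by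
    intro i
    apply Polynomial.natDegree_sum_le_of_forall_le
    intro c _
    refine le_trans (Polynomial.natDegree_C_mul_le _ _) ?_
    rw [Polynomial.natDegree_X_pow]
    omega
  have h2 := Finset.sum_le_sum (fun i (_ : i ∈ Finset.univ) => this i)
  refine le_trans h2 ?_
  rw [Finset.sum_const, Finset.card_univ, Fintype.card_fin, smul_eq_mul]
  omega

lemma Fpoly_eval_complex (s : ℂ) :
    ((Fpoly p).map (algebraMap ℝ ℂ)).eval s
      = ∏ i, ((p i 0 : ℂ) + (p i 1 : ℝ) * s + (p i 2 : ℝ) * s^2) := by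
  rw [Fpoly, Polynomial.map_prod, Polynomial.eval_prod]
  apply Finset.prod_congr rfl
  intro i _
  rw [Polynomial.map_sum]
  simp [Fin.sum_univ_three]

noncomputable def Apoly : Polynomial ℝ :=
  ∑ k ∈ Finset.range (n+1), Polynomial.C ((Fpoly p).coeff (2*k)) * Polynomial.X ^ k

noncomputable def Bpoly : Polynomial ℝ :=
  ∑ k ∈ Finset.range n, Polynomial.C ((Fpoly p).coeff (2*k+1)) * Polynomial.X ^ k

lemma Apoly_natDegree : (Apoly p).natDegree ≤ n := by
  apply Polynomial.natDegree_sum_le_of_forall_le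
  intro k hk
  refine le_trans (Polynomial.natDegree_C_mul_le _ _) ?_
  rw [Polynomial.natDegree_X_pow]
  exact Nat.lt_succ_iff.mp (Finset.mem_range.mp hk)

lemma Bpoly_natDegree : (Bpoly p).natDegree ≤ n - 1 := by
  apply Polynomial.natDegree_sum_le_of_forall_le
  intro k hk
  refine le_trans (Polynomial.natDegree_C_mul_le _ _) ?_
  rw [Polynomial.natDegree_X_pow]
  have := Finset.mem_range.mp hk
  omega

lemma Apoly_eval (z : ℝ) : (Apoly p).eval z
    = ∑ k ∈ Finset.range (n+1), (Fpoly p).coeff (2*k) * z^k := by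
  rw [Apoly, Polynomial.eval_finset_sum]
  simp

lemma Bpoly_eval (z : ℝ) : (Bpoly p).eval z
    = ∑ k ∈ Finset.range n, (Fpoly p).coeff (2*k+1) * z^k := by
  rw [Bpoly, Polynomial.eval_finset_sum]
  simp

lemma Apoly_coeff_zero : (Apoly p).coeff 0 = (Fpoly p).coeff 0 := by
  rw [Apoly, Polynomial.finset_sum_coeff]
  rw [Finset.sum_eq_single 0]
  · simp
  · intro k _ hk
    rw [Polynomial.coeff_C_mul, Polynomial.coeff_X_pow, if_neg (by omega : ¬ 0 = k), mul_zero]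
  · intro h
    simp at h

lemma Bpoly_coeff_zero : (Bpoly p).coeff 0 = (Fpoly p).coeff 1 := by
  rw [Bpoly, Polynomial.finset_sum_coeff]
  by_cases hn : n = 0
  · subst hn
    simp [Fpoly, Polynomial.coeff_one]
  rw [Finset.sum_eq_single 0]
  · simp
  · intro k _ hk
    rw [Polynomial.coeff_C_mul, Polynomial.coeff_X_pow, if_neg (by omega : ¬ 0 = k), mul_zero]
  · intro h
    simp at h
    omega

lemma Apoly_even_eval (s : ℂ) :
    ((Apoly p).map (algebraMap ℝ ℂ)).eval (s^2) * 2
      = ((Fpoly p).map (algebraMap ℝ ℂ)).eval s + ((Fpoly p).map (algebraMap ℝ ℂ)).eval (-s) := by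
  have hdeg : ((Fpoly p).map (algebraMap ℝ ℂ)).natDegree < 2*(n+1) := by
    refine lt_of_le_of_lt (le_trans Polynomial.natDegree_map_le (Fpoly_natDegree p)) ?_
    omega
  rw [← even_part_eval ((Fpoly p).map (algebraMap ℝ ℂ)) (n+1) hdeg s]
  congr 1
  rw [Apoly, Polynomial.map_sum, Polynomial.eval_finset_sum]
  apply Finset.sum_congr rfl
  intro k _
  simp [Polynomial.coeff_map]

lemma Bpoly_odd_eval (s : ℂ) :
    ((Bpoly p).map (algebraMap ℝ ℂ)).eval (s^2) * (2*s)
      = ((Fpoly p).map (algebraMap ℝ ℂ)).eval s - ((Fpoly p).map (algebraMap ℝ ℂ)).eval (-s) := by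
  have hdeg0 : ((Fpoly p).map (algebraMap ℝ ℂ)).natDegree ≤ 2*n :=
    le_trans Polynomial.natDegree_map_le (Fpoly_natDegree p)
  have hdeg' : ((Fpoly p).map (algebraMap ℝ ℂ)).natDegree < 2*(n+1) := by omega
  rw [← odd_part_eval ((Fpoly p).map (algebraMap ℝ ℂ)) (n+1) hdeg' s]
  have hsum : ∑ k ∈ Finset.range (n+1), ((Fpoly p).map (algebraMap ℝ ℂ)).coeff (2*k+1) * (s^2)^k
      = ∑ k ∈ Finset.range n, ((Fpoly p).map (algebraMap ℝ ℂ)).coeff (2*k+1) * (s^2)^k := by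
    rw [Finset.sum_range_succ]
    have : ((Fpoly p).map (algebraMap ℝ ℂ)).coeff (2*n+1) = 0 := by
      apply Polynomial.coeff_eq_zero_of_natDegree_lt
      omega
    rw [this, zero_mul, add_zero]
  rw [hsum]
  congr 1
  rw [Bpoly, Polynomial.map_sum, Polynomial.eval_finset_sum]
  apply Finset.sum_congr rfl
  intro k _
  simp [Polynomial.coeff_map]

end FF

section Roots
open Polynomial
variable {n : ℕ} (p : Fin n → Fin 3 → ℝ)

lemma sq_root_loc {s z : ℂ} (hs : s^2 = z) (hre : s.re = 0) (hzne : z ≠ 0) :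
    z.im = 0 ∧ z.re < 0 := by
  have hsne : s ≠ 0 := fun h => hzne (by rw [← hs, h]; simp)
  have him : s.im ≠ 0 := by
    intro h
    exact hsne (Complex.ext hre h)
  constructor
  · rw [← hs]
    simp [pow_two, Complex.mul_im, hre]
  · rw [← hs]
    have h1 : (s^2).re = s.re * s.re - s.im * s.im := by simp [pow_two, Complex.mul_re]
    rw [h1, hre]
    nlinarith [mul_self_pos.mpr him]

lemma Fpoly_coeff_zero_pos (hp : ∀ i c, 0 < p i c) : 0 < (Fpoly p).coeff 0 := by
  classical
  rw [Fpoly_coeff]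
  apply Finset.sum_pos
  · intro v _
    exact Finset.prod_pos fun i _ => hp i _
  · refine ⟨fun _ => 0, ?_⟩
    simp

lemma Fpoly_coeff_one_pos (hn : 0 < n) (hp : ∀ i c, 0 < p i c) : 0 < (Fpoly p).coeff 1 := by
  classical
  rw [Fpoly_coeff]
  apply Finset.sum_pos
  · intro v _
    exact Finset.prod_pos fun i _ => hp i _
  · refine ⟨fun i => if i = ⟨0, hn⟩ then 1 else 0, ?_⟩
    simp only [Finset.mem_filter, Finset.mem_univ, true_and]
    rw [Finset.sum_congr rfl (fun i _ => ?_), Finset.sum_ite_eq' Finset.univ (⟨0, hn⟩ : Fin n) (fun _ => (1:ℕ))]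
    · simp
    · rw [apply_ite (fun c : Fin 3 => (c : ℕ))]
      rfl

lemma Apoly_roots (hp : ∀ i c, 0 < p i c) :
    ∀ z ∈ ((Apoly p).map (algebraMap ℝ ℂ)).roots, z.im = 0 ∧ z.re < 0 := by
  classical
  intro z hz
  have hF0 := Fpoly_coeff_zero_pos p hp
  have hA0 : (Apoly p).coeff 0 ≠ 0 := by rw [Apoly_coeff_zero]; exact ne_of_gt hF0
  have hAne : Apoly p ≠ 0 := fun h => hA0 (by simp [h])
  have hAcne : (Apoly p).map (algebraMap ℝ ℂ) ≠ 0 :=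
    (Polynomial.map_ne_zero_iff (algebraMap ℝ ℂ).injective).mpr hAne
  have hroot : ((Apoly p).map (algebraMap ℝ ℂ)).IsRoot z := (Polynomial.mem_roots hAcne).mp hz
  have hzne : z ≠ 0 := by
    intro h
    rw [h] at hroot
    have : ((Apoly p).map (algebraMap ℝ ℂ)).coeff 0 = 0 := by
      rwa [Polynomial.coeff_zero_eq_eval_zero]
    rw [Polynomial.coeff_map] at this
    exact hA0 ((map_eq_zero_iff _ (algebraMap ℝ ℂ).injective).mp this)
  have hn : 0 < n := by
    by_contra h
    have hdeg : ((Apoly p).map (algebraMap ℝ ℂ)).natDegree ≤ n :=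
      le_trans Polynomial.natDegree_map_le (Apoly_natDegree p)
    have hpos := Polynomial.natDegree_pos_iff_degree_pos.mpr
      (Polynomial.degree_pos_of_root hAcne hroot)
    omega
  obtain ⟨s, hs⟩ := IsAlgClosed.exists_pow_nat_eq z (n := 2) (by norm_num)
  have heval : ((Apoly p).map (algebraMap ℝ ℂ)).eval (s^2) = 0 := by rw [hs]; exact hroot
  have hsum0 := Apoly_even_eval p s
  rw [heval, zero_mul] at hsum0
  have habs : ‖((Fpoly p).map (algebraMap ℝ ℂ)).eval (-s)‖
      = ‖((Fpoly p).map (algebraMap ℝ ℂ)).eval s‖ := by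
    have : ((Fpoly p).map (algebraMap ℝ ℂ)).eval (-s)
        = -((Fpoly p).map (algebraMap ℝ ℂ)).eval s := by linear_combination -hsum0
    rw [this, norm_neg]
  rw [Fpoly_eval_complex, Fpoly_eval_complex] at habs
  have hre := re_eq_zero_of_abs_eq hn (fun i => p i 0) (fun i => p i 1) (fun i => p i 2)
    (fun i => hp i 0) (fun i => hp i 1) (fun i => (hp i 2).le) s habs
  exact sq_root_loc hs hre hzne

lemma Bpoly_roots (hp : ∀ i c, 0 < p i c) (hBne : Bpoly p ≠ 0) :
    ∀ z ∈ ((Bpoly p).map (algebraMap ℝ ℂ)).roots, z.im = 0 ∧ z.re < 0 := by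
  classical
  intro z hz
  have hn : 0 < n := by
    rcases Nat.eq_zero_or_pos n with h | h
    · exfalso; apply hBne; rw [Bpoly]; subst h; simp
    · exact h
  have hF1 := Fpoly_coeff_one_pos p hn hp
  have hB0 : (Bpoly p).coeff 0 ≠ 0 := by rw [Bpoly_coeff_zero]; exact ne_of_gt hF1
  have hBcne : (Bpoly p).map (algebraMap ℝ ℂ) ≠ 0 :=
    (Polynomial.map_ne_zero_iff (algebraMap ℝ ℂ).injective).mpr hBne
  have hroot : ((Bpoly p).map (algebraMap ℝ ℂ)).IsRoot z := (Polynomial.mem_roots hBcne).mp hz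
  have hzne : z ≠ 0 := by
    intro h
    rw [h] at hroot
    have : ((Bpoly p).map (algebraMap ℝ ℂ)).coeff 0 = 0 := by
      rwa [Polynomial.coeff_zero_eq_eval_zero]
    rw [Polynomial.coeff_map] at this
    exact hB0 ((map_eq_zero_iff _ (algebraMap ℝ ℂ).injective).mp this)
  obtain ⟨s, hs⟩ := IsAlgClosed.exists_pow_nat_eq z (n := 2) (by norm_num)
  have heval : ((Bpoly p).map (algebraMap ℝ ℂ)).eval (s^2) = 0 := by rw [hs]; exact hroot
  have hsum0 := Bpoly_odd_eval p s
  rw [heval, zero_mul] at hsum0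
  have habs : ‖((Fpoly p).map (algebraMap ℝ ℂ)).eval (-s)‖
      = ‖((Fpoly p).map (algebraMap ℝ ℂ)).eval s‖ := by
    have : ((Fpoly p).map (algebraMap ℝ ℂ)).eval (-s)
        = ((Fpoly p).map (algebraMap ℝ ℂ)).eval s := by linear_combination hsum0
    rw [this]
  rw [Fpoly_eval_complex, Fpoly_eval_complex] at habs
  have hre := re_eq_zero_of_abs_eq hn (fun i => p i 0) (fun i => p i 1) (fun i => p i 2)
    (fun i => hp i 0) (fun i => hp i 1) (fun i => (hp i 2).le) s habs
  exact sq_root_loc hs hre hzne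

end Roots

section Meas
open MeasureTheory ProbabilityTheory
open scoped MeasureTheory ProbabilityTheory
noncomputable def val3 (c : Fin 3) : ℝ := (c : ℕ) / 2

lemma val3_injective : Function.Injective val3 := by
  intro a b hab
  fin_cases a <;> fin_cases b <;> simp_all [val3] <;> norm_num at hab

variable {Ω : Type*} [MeasureSpace Ω] [IsProbabilityMeasure (ℙ : Measure Ω)]
variable {n : ℕ} (X : Fin n → Ω → ℝ)

lemma prob_sum_eq (hmeas : ∀ i, Measurable (X i))
    (hindep : ProbabilityTheory.iIndepFun X ℙ)
    (hone : ∀ i, ∑ c : Fin 3, ℙ {ω | X i ω = val3 c} = 1)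
    (P : ℝ → Prop) [DecidablePred P] :
    ℙ {ω | P (∑ i, X i ω)}
      = ∑ v ∈ Finset.univ.filter (fun v : Fin n → Fin 3 => P (∑ i, val3 (v i))),
          ∏ i, ℙ {ω | X i ω = val3 (v i)} := by
  classical
  set S : Fin n → Fin 3 → Set Ω := fun i c => X i ⁻¹' {val3 c} with hS
  have hSeq : ∀ i c, {ω | X i ω = val3 c} = S i c := by
    intro i c; rfl
  have hSmeas : ∀ i c, MeasurableSet (S i c) := fun i c => (hmeas i) (measurableSet_singleton _)
  have hSdisj : ∀ i, Pairwise (Function.onFun Disjoint (S i)) := by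
    intro i c c' hcc'
    apply Set.disjoint_left.mpr
    intro ω h1 h2
    exact hcc' (val3_injective (h1.symm.trans h2 : val3 c = val3 c'))
  set E : (Fin n → Fin 3) → Set Ω := fun v => ⋂ i, S i (v i) with hE
  have hEmeas : ∀ v, MeasurableSet (E v) := fun v => MeasurableSet.iInter fun i => hSmeas i (v i)
  have hEprob : ∀ v, ℙ (E v) = ∏ i, ℙ (S i (v i)) := by
    intro v
    exact hindep.meas_iInter fun i => ⟨{val3 (v i)}, measurableSet_singleton _, rfl⟩
  have hEdisj : ∀ v v' : Fin n → Fin 3, v ≠ v' → Disjoint (E v) (E v') := by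
    intro v v' hvv'
    obtain ⟨i, hi⟩ := Function.ne_iff.mp hvv'
    refine Set.disjoint_left.mpr fun ω h1 h2 => ?_
    have h1i : ω ∈ S i (v i) := Set.mem_iInter.mp h1 i
    have h2i : ω ∈ S i (v' i) := Set.mem_iInter.mp h2 i
    exact hi (val3_injective ((h1i.symm.trans h2i : val3 (v i) = val3 (v' i))))
  set G : Set Ω := ⋃ v, E v with hG
  have hGcnull : ℙ Gᶜ = 0 := by
    have hsub : Gᶜ ⊆ ⋃ i, (⋃ c, S i c)ᶜ := by
      intro ω hω
      by_contra hcon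
      simp only [Set.mem_iUnion, not_exists, Set.mem_compl_iff, not_not] at hcon
      have : ∀ i, ∃ c, ω ∈ S i c := by
        intro i
        have := hcon i
        simpa [Set.mem_iUnion] using this
      choose v hv using this
      exact hω (Set.mem_iUnion.mpr ⟨v, Set.mem_iInter.mpr hv⟩)
    refine le_antisymm (le_trans (measure_mono hsub) ?_) zero_le
    rw [show (0 : ENNReal) = ∑' i : Fin n, 0 by simp]
    refine le_trans (measure_iUnion_le _) ?_
    apply ENNReal.tsum_le_tsum
    intro i
    have h1 : ℙ (⋃ c, S i c) = 1 := by
      rw [measure_iUnion (hSdisj i) (fun c => hSmeas i c)]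
      rw [tsum_fintype]
      simpa [hSeq] using hone i
    have h2 : MeasurableSet (⋃ c, S i c) := MeasurableSet.iUnion fun c => hSmeas i c
    exact le_of_eq ((prob_compl_eq_zero_iff h2).mpr h1)
  set T : Set Ω := {ω | P (∑ i, X i ω)} with hT
  have hTG : ℙ T = ℙ (T ∩ G) := by
    refine le_antisymm ?_ (measure_mono Set.inter_subset_left)
    refine le_trans (measure_le_inter_add_diff _ T G) ?_
    have hz : ℙ (T \ G) = 0 :=
      le_antisymm (le_trans (measure_mono (fun ω hω => hω.2)) hGcnull.le) zero_le
    rw [hz, add_zero]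
  have hTGeq : T ∩ G
      = ⋃ v ∈ Finset.univ.filter (fun v : Fin n → Fin 3 => P (∑ i, val3 (v i))), E v := by
    ext ω
    constructor
    · rintro ⟨hP, hg⟩
      obtain ⟨v, hv⟩ := Set.mem_iUnion.mp hg
      have hf : ∑ i, X i ω = ∑ i, val3 (v i) :=
        Finset.sum_congr rfl fun i _ => (Set.mem_iInter.mp hv i : X i ω = val3 (v i))
      refine Set.mem_iUnion₂.mpr ⟨v, ?_, hv⟩
      exact Finset.mem_filter.mpr ⟨Finset.mem_univ v, by rw [← hf]; exact hP⟩
    · intro hω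
      obtain ⟨v, hvf, hv⟩ := Set.mem_iUnion₂.mp hω
      have hf : ∑ i, X i ω = ∑ i, val3 (v i) :=
        Finset.sum_congr rfl fun i _ => (Set.mem_iInter.mp hv i : X i ω = val3 (v i))
      constructor
      · show P (∑ i, X i ω)
        rw [hf]
        exact (Finset.mem_filter.mp hvf).2
      · exact Set.mem_iUnion.mpr ⟨v, hv⟩
  rw [hTG, hTGeq, measure_biUnion_finset (fun v _ v' _ h => hEdisj v v' h) (fun v _ => hEmeas v)]
  apply Finset.sum_congr rfl
  intro v _
  rw [hEprob]
  apply Finset.prod_congr rfl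
  intro i _
  rw [hSeq]
end Meas

open MeasureTheory ProbabilityTheory Finset
open scoped Classical

end AuxPoisson

/-- if `L_i, T_i, W_i > 0` for all `i`, then the two conditional
distributions are Poisson binomial: their (unnormalized) generating polynomials
factor as `P(X ∈ ℤ)·∏_j (1 - q_j + q_j z)` and
`P(X ∈ ℤ+1/2)·∏_j (1 - r_j + r_j z)` with `q_j, r_j ∈ [0,1]`. -/
theorem poisson_trinomial_conditional_poisson_binomial
    {Ω : Type*} [MeasureSpace Ω] [IsProbabilityMeasure (ℙ : Measure Ω)]
    {n : ℕ} (X : Fin n → Ω → ℝ) (T W : Fin n → ℝ)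
    (hmeas : ∀ i, Measurable (X i))
    (hindep : iIndepFun X ℙ)
    (hTpos : ∀ i, 0 < T i) (hWpos : ∀ i, 0 < W i) (hLpos : ∀ i, 0 < 1 - T i - W i)
    (hT : ∀ i, (ℙ {ω | X i ω = 1/2}).toReal = T i)
    (hW : ∀ i, (ℙ {ω | X i ω = 1}).toReal = W i)
    (hL : ∀ i, (ℙ {ω | X i ω = 0}).toReal = 1 - T i - W i) :
    ∃ (q : Fin n → ℝ) (r : Fin (n - 1) → ℝ),
      (∀ j, q j ∈ Set.Icc (0 : ℝ) 1) ∧ (∀ j, r j ∈ Set.Icc (0 : ℝ) 1) ∧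
      (∀ z : ℝ, ∑ k ∈ Finset.range (n + 1),
          (ℙ {ω | (∑ i, X i ω) = (k : ℝ)}).toReal * z ^ k =
        (ℙ {ω | ∃ m : ℤ, (∑ i, X i ω) = (m : ℝ)}).toReal *
          ∏ j, (1 - q j + q j * z)) ∧
      (∀ z : ℝ, ∑ k ∈ Finset.range n,
          (ℙ {ω | (∑ i, X i ω) = (k : ℝ) + 1/2}).toReal * z ^ k =
        (ℙ {ω | ∃ m : ℤ, (∑ i, X i ω) = (m : ℝ) + 1/2}).toReal *
          ∏ j, (1 - r j + r j * z)) := by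
  classical
  have e0 : val3 0 = 0 := by norm_num [val3]
  have e1 : val3 1 = 1/2 := by norm_num [val3]
  have e2 : val3 2 = 1 := by norm_num [val3]
  set p : Fin n → Fin 3 → ℝ := fun i c => (ℙ {ω | X i ω = val3 c}).toReal with hp_def
  have hp0 : ∀ i, p i 0 = 1 - T i - W i := by intro i; simp only [hp_def]; rw [e0]; exact hL i
  have hp1 : ∀ i, p i 1 = T i := by intro i; simp only [hp_def]; rw [e1]; exact hT i
  have hp2 : ∀ i, p i 2 = W i := by intro i; simp only [hp_def]; rw [e2]; exact hW i
  have hp : ∀ i c, 0 < p i c := by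
    intro i c
    fin_cases c
    · show 0 < p i 0
      rw [hp0]; exact hLpos i
    · show 0 < p i 1
      rw [hp1]; exact hTpos i
    · show 0 < p i 2
      rw [hp2]; exact hWpos i
  have hone : ∀ i, ∑ c : Fin 3, ℙ {ω | X i ω = val3 c} = 1 := by
    intro i
    have hne : ∀ c : Fin 3, ℙ {ω | X i ω = val3 c} ≠ ⊤ := fun c => measure_ne_top _ _
    have h1 : (∑ c : Fin 3, ℙ {ω | X i ω = val3 c}).toReal = 1 := by
      rw [ENNReal.toReal_sum (fun c _ => hne c), Fin.sum_univ_three, e0, e1, e2,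
        hL i, hT i, hW i]
      ring
    have h2 : (∑ c : Fin 3, ℙ {ω | X i ω = val3 c}) ≠ ⊤ :=
      ENNReal.sum_ne_top.mpr (fun c _ => hne c)
    rw [← ENNReal.toReal_one] at h1
    exact (ENNReal.toReal_eq_toReal_iff' h2 ENNReal.one_ne_top).mp h1
  have key : ∀ P : ℝ → Prop, (ℙ {ω | P (∑ i, X i ω)}).toReal
      = ∑ v ∈ Finset.univ.filter (fun v : Fin n → Fin 3 => P (∑ i, val3 (v i))),
          ∏ i, p i (v i) := by
    intro P
    rw [prob_sum_eq X hmeas hindep hone P]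
    rw [ENNReal.toReal_sum (fun v _ => ENNReal.prod_ne_top (fun i _ => measure_ne_top _ _))]
    apply Finset.sum_congr rfl
    intro v _
    rw [ENNReal.toReal_prod]
  set N : (Fin n → Fin 3) → ℕ := fun v => ∑ i, ((v i : ℕ)) with hN_def
  have hval : ∀ v : Fin n → Fin 3, ∑ i, val3 (v i) = (N v : ℝ)/2 := by
    intro v
    simp only [hN_def, val3]
    rw [← Finset.sum_div]
    push_cast
    rfl
  have hNle : ∀ v : Fin n → Fin 3, N v ≤ 2*n := by
    intro v
    rw [hN_def]
    calc ∑ i, ((v i : ℕ)) ≤ ∑ _i : Fin n, 2 :=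
        Finset.sum_le_sum (fun i _ => Nat.lt_succ_iff.mp (v i).isLt)
      _ = 2*n := by rw [Finset.sum_const, Finset.card_univ, Fintype.card_fin, smul_eq_mul]; omega
  have ecoeff : ∀ M : ℕ, (Fpoly p).coeff M
      = ∑ v ∈ Finset.univ.filter (fun v : Fin n → Fin 3 => N v = M), ∏ i, p i (v i) := by
    intro M
    rw [Fpoly_coeff]
  have eInt : (ℙ {ω | ∃ m : ℤ, (∑ i, X i ω) = (m : ℝ)}).toReal = (Apoly p).eval 1 := by
    rw [key (fun x => ∃ m : ℤ, x = (m : ℝ)), Apoly_eval]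
    have hfilter : Finset.univ.filter (fun v : Fin n → Fin 3 => ∃ m : ℤ, ∑ i, val3 (v i) = (m:ℝ))
        = (Finset.range (n+1)).biUnion
            (fun k => Finset.univ.filter (fun v : Fin n → Fin 3 => N v = 2*k)) := by
      ext v
      simp only [Finset.mem_filter, Finset.mem_biUnion, Finset.mem_range, Finset.mem_univ,
        true_and]
      rw [hval]
      constructor
      · rintro ⟨m, hm⟩
        have h2 : (N v : ℝ) = 2*(m:ℝ) := by field_simp at hm; linarith
        have h3 : (N v : ℤ) = 2*m := by exact_mod_cast h2
        have h4 := hNle v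
        exact ⟨m.toNat, by omega, by omega⟩
      · rintro ⟨k, _, hNv⟩
        refine ⟨(k : ℤ), ?_⟩
        rw [hNv]; push_cast; ring
    rw [hfilter, Finset.sum_biUnion ?hdisj]
    case hdisj =>
      intro a _ b _ hab
      refine Finset.disjoint_left.mpr fun {v} hva hvb => ?_
      have h1 := (Finset.mem_filter.mp hva).2
      have h2 := (Finset.mem_filter.mp hvb).2
      exact hab (by omega)
    apply Finset.sum_congr rfl
    intro k _
    rw [ecoeff, one_pow, mul_one]
  have eHalf : (ℙ {ω | ∃ m : ℤ, (∑ i, X i ω) = (m : ℝ) + 1/2}).toReal = (Bpoly p).eval 1 := by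
    rw [key (fun x => ∃ m : ℤ, x = (m : ℝ) + 1/2), Bpoly_eval]
    have hfilter : Finset.univ.filter
          (fun v : Fin n → Fin 3 => ∃ m : ℤ, ∑ i, val3 (v i) = (m:ℝ) + 1/2)
        = (Finset.range n).biUnion
            (fun k => Finset.univ.filter (fun v : Fin n → Fin 3 => N v = 2*k+1)) := by
      ext v
      simp only [Finset.mem_filter, Finset.mem_biUnion, Finset.mem_range, Finset.mem_univ,
        true_and]
      rw [hval]
      constructor
      · rintro ⟨m, hm⟩
        have h2 : (N v : ℝ) = 2*(m:ℝ)+1 := by field_simp at hm; linarith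
        have h3 : (N v : ℤ) = 2*m+1 := by exact_mod_cast h2
        have h4 := hNle v
        exact ⟨m.toNat, by omega, by omega⟩
      · rintro ⟨k, _, hNv⟩
        refine ⟨(k : ℤ), ?_⟩
        rw [hNv]; push_cast; ring
    rw [hfilter, Finset.sum_biUnion ?hdisj2]
    case hdisj2 =>
      intro a _ b _ hab
      refine Finset.disjoint_left.mpr fun {v} hva hvb => ?_
      have h1 := (Finset.mem_filter.mp hva).2
      have h2 := (Finset.mem_filter.mp hvb).2
      exact hab (by omega)
    apply Finset.sum_congr rfl
    intro k _
    rw [ecoeff, one_pow, mul_one]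
  have ek : ∀ k : ℕ, (ℙ {ω | (∑ i, X i ω) = (k : ℝ)}).toReal = (Fpoly p).coeff (2*k) := by
    intro k
    rw [key (fun x => x = (k:ℝ)), ecoeff]
    apply Finset.sum_congr _ (fun _ _ => rfl)
    apply Finset.filter_congr
    intro v _
    rw [hval]
    constructor
    · intro h
      have h2 : (N v : ℝ) = 2*(k:ℝ) := by field_simp at h; linarith
      exact_mod_cast h2
    · intro h
      rw [h]; push_cast; ring
  have ekh : ∀ k : ℕ, (ℙ {ω | (∑ i, X i ω) = (k : ℝ) + 1/2}).toReal
      = (Fpoly p).coeff (2*k+1) := by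
    intro k
    rw [key (fun x => x = (k:ℝ) + 1/2), ecoeff]
    apply Finset.sum_congr _ (fun _ _ => rfl)
    apply Finset.filter_congr
    intro v _
    rw [hval]
    constructor
    · intro h
      have h2 : (N v : ℝ) = 2*(k:ℝ)+1 := by field_simp at h; linarith
      exact_mod_cast h2
    · intro h
      rw [h]; push_cast; ring
  have hA0 : (Apoly p).coeff 0 ≠ 0 := by
    rw [Apoly_coeff_zero]; exact ne_of_gt (Fpoly_coeff_zero_pos p hp)
  have hAne : Apoly p ≠ 0 := fun h => hA0 (by rw [h]; simp)
  obtain ⟨q, hq, hqid⟩ :=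
    factor_neg_real_roots (Apoly p) hAne n (Apoly_natDegree p) (Apoly_roots p hp)
  have firstId : ∀ z : ℝ, ∑ k ∈ Finset.range (n+1),
        (ℙ {ω | (∑ i, X i ω) = (k:ℝ)}).toReal * z^k
      = (ℙ {ω | ∃ m : ℤ, (∑ i, X i ω) = (m:ℝ)}).toReal * ∏ j, (1 - q j + q j * z) := by
    intro z
    have lhs : ∑ k ∈ Finset.range (n+1), (ℙ {ω | (∑ i, X i ω) = (k:ℝ)}).toReal * z^k
        = (Apoly p).eval z := by
      rw [Apoly_eval]
      exact Finset.sum_congr rfl fun k _ => by rw [ek k]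
    rw [lhs, eInt, hqid z]
  have lhsB : ∀ z : ℝ, ∑ k ∈ Finset.range n,
        (ℙ {ω | (∑ i, X i ω) = (k:ℝ) + 1/2}).toReal * z^k = (Bpoly p).eval z := by
    intro z
    rw [Bpoly_eval]
    exact Finset.sum_congr rfl fun k _ => by rw [ekh k]
  by_cases hB : Bpoly p = 0
  · refine ⟨q, fun _ => 0, hq, fun _ => ⟨le_refl 0, zero_le_one⟩, firstId, ?_⟩
    intro z
    rw [lhsB z, eHalf, hB]
    simp
  · obtain ⟨r, hr, hrid⟩ :=
      factor_neg_real_roots (Bpoly p) hB (n-1) (Bpoly_natDegree p) (Bpoly_roots p hp hB)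
    refine ⟨q, r, hq, hr, firstId, ?_⟩
    intro z
    rw [lhsB z, eHalf, hrid z]
end
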